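/- arXiv:1609.02762 — 2 statements merged into one kernel-verified Lean document; each statement's English description precedes it below -/
import Mathlib

section
/- Let p = Σ_α β_α x^α be a real polynomial in n variables of total degree at most d (d ≥ 0). Then ‖p‖_{R[x]} ≤ 3^{d+1} · max_{x ∈ [−1,1]^n} |p(x)|. -/
set_option maxHeartbeats 1000000 in
section

namespace CoeffNormAux
open Real Finset Polynomial Polynomial.Chebyshev Nat


noncomputable def th (N j : ℕ) : ℝ := (2 * j + 1) * π / (2 * N)

lemma sum_cos_zero {N m : ℕ} (hN : 0 < N) (h1 : 1 ≤ m) (h2 : m < 2 * N) :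
    ∑ j ∈ range N, cos (m * th N j) = 0 := by
  set ph := m * π / (2 * N) with hph
  have hNpos : (0:ℝ) < (N:ℝ) := by exact_mod_cast hN
  have hphpos : 0 < ph := by
    apply _root_.div_pos (by positivity)
    positivity
  have hphlt : ph < π := by
    rw [hph, div_lt_iff₀ (by positivity)]
    have : (m:ℝ) < 2 * N := by exact_mod_cast h2
    nlinarith [pi_pos]
  have hsin : sin ph ≠ 0 := ne_of_gt (sin_pos_of_pos_of_lt_pi hphpos hphlt)
  have key : ∀ j : ℕ, 2 * sin ph * cos (m * th N j) =
      sin (2*(j+1)*ph) - sin (2*j*ph) := by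
    intro j
    have hth : (m : ℝ) * th N j = (2*j+1) * ph := by
      rw [th, hph]
      field_simp
    rw [hth]
    have e1 : (2*((j:ℝ)+1))*ph = (2*j+1)*ph + ph := by ring
    have e2 : (2*(j:ℝ))*ph = (2*j+1)*ph - ph := by ring
    rw [show (2*((j:ℕ)+1):ℝ) = 2*((j:ℝ)+1) by push_cast; ring] at *
    rw [e1, e2, sin_add, sin_sub]
    ring
  have tele : ∑ j ∈ range N, (sin (2*((j:ℝ)+1)*ph) - sin (2*(j:ℝ)*ph))
      = sin (2*(N:ℝ)*ph) - sin (2*(0:ℝ)*ph) := by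
    have := Finset.sum_range_sub (f := fun j : ℕ => sin (2*(j:ℝ)*ph)) N
    simpa using this
  have hend : sin (2*(N:ℝ)*ph) = 0 := by
    have : 2*(N:ℝ)*ph = m * π := by
      rw [hph]; field_simp
    rw [this, sin_nat_mul_pi]
  have h0 : sin (2*(0:ℝ)*ph) = 0 := by norm_num
  have hsum : 2 * sin ph * ∑ j ∈ range N, cos (m * th N j) = 0 := by
    rw [Finset.mul_sum]
    calc ∑ j ∈ range N, 2 * sin ph * cos (m * th N j)
        = ∑ j ∈ range N, (sin (2*((j:ℝ)+1)*ph) - sin (2*(j:ℝ)*ph)) := by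
          apply Finset.sum_congr rfl
          intro j _
          exact key j
      _ = 0 := by rw [tele, hend, h0]; ring
  have h2s : (2 : ℝ) * sin ph ≠ 0 := by
    intro h
    apply hsin
    linarith [mul_eq_zero.mp h |>.elim (fun h => absurd h (by norm_num)) id]
  exact (mul_eq_zero.mp hsum).resolve_left h2s

lemma cos_mul_cos' (x y : ℝ) : cos x * cos y = (cos (x+y) + cos (x-y))/2 := by
  rw [cos_add, cos_sub]; ring

lemma orth_lt {N g b : ℕ} (hb : b < g) (hg : g < N) :
    ∑ j ∈ range N, cos (g * th N j) * cos (b * th N j) = 0 := by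
  have hN : 0 < N := lt_trans (Nat.lt_of_le_of_lt (Nat.zero_le b) hb) hg
  have : ∀ j ∈ range N, cos (g * th N j) * cos (b * th N j)
      = (cos (((g+b:ℕ):ℝ) * th N j) + cos (((g-b:ℕ):ℝ) * th N j))/2 := by
    intro j _
    rw [cos_mul_cos']
    have e1 : (g:ℝ) * th N j + b * th N j = ((g+b:ℕ):ℝ) * th N j := by push_cast; ring
    have e2 : (g:ℝ) * th N j - b * th N j = ((g-b:ℕ):ℝ) * th N j := by
      rw [Nat.cast_sub hb.le]; ring
    rw [e1, e2]
  rw [Finset.sum_congr rfl this, ← Finset.sum_div, Finset.sum_add_distrib]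
  rw [sum_cos_zero hN (by omega) (by omega), sum_cos_zero hN (by omega) (by omega)]
  norm_num

lemma orth {N g b : ℕ} (hg : g < N) (hb : b < N) :
    ∑ j ∈ range N, cos (g * th N j) * cos (b * th N j) =
      if g = b then (if g = 0 then (N:ℝ) else (N:ℝ) / 2) else 0 := by
  have hN : 0 < N := Nat.pos_of_ne_zero (by omega)
  by_cases hgb : g = b
  · subst hgb
    by_cases h0 : g = 0
    · subst h0
      simp
    · have : ∀ j ∈ range N, cos (g * th N j) * cos (g * th N j)
          = (cos (((g+g:ℕ):ℝ) * th N j) + 1)/2 := by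
        intro j _
        rw [cos_mul_cos']
        have e1 : (g:ℝ) * th N j + g * th N j = ((g+g:ℕ):ℝ) * th N j := by push_cast; ring
        rw [e1]
        simp
      rw [Finset.sum_congr rfl this, ← Finset.sum_div, Finset.sum_add_distrib]
      rw [sum_cos_zero hN (by omega) (by omega)]
      simp [h0]
  · rw [if_neg hgb]
    rcases Nat.lt_or_ge b g with h | h
    · exact orth_lt h hg
    · have hlt : g < b := by omega
      have := orth_lt hlt hb
      rw [← this]
      apply Finset.sum_congr rfl
      intro j _
      ring



noncomputable def c : ℕ → ℕ → ℝ
  | 0, 0 => 1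
  | 0, _+1 => 0
  | h+1, 0 => c h 1 / 2
  | h+1, 1 => c h 0 + c h 2 / 2
  | h+1, (g+2) => (c h (g+1) + c h (g+3))/2

lemma c_eq_zero : ∀ h g, h < g → c h g = 0 := by
  intro h
  induction h with
  | zero =>
    intro g hg
    match g, hg with
    | g+1, _ => rfl
  | succ h ih =>
    intro g hg
    match g, hg with
    | g+2, hg =>
      show (c h (g+1) + c h (g+3))/2 = 0
      rw [ih _ (by omega), ih _ (by omega)]
      norm_num

lemma xT (g : ℤ) : (X : ℝ[X]) * T ℝ g = Polynomial.C (2⁻¹:ℝ) * (T ℝ (g+1) + T ℝ (g-1)) := by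
  have h := Polynomial.Chebyshev.T_add_two ℝ (g-1)
  have e1 : g - 1 + 2 = g + 1 := by ring
  have e2 : g - 1 + 1 = g := by ring
  rw [e1, e2] at h
  have h2 : T ℝ (g+1) + T ℝ (g-1) = 2 * (X * T ℝ g) := by rw [h]; ring
  rw [h2]
  have : Polynomial.C (2⁻¹:ℝ) * (2:ℝ[X]) = 1 := by
    have h2c : (2:ℝ[X]) = Polynomial.C (2:ℝ) := by
      rw [show (2:ℝ) = ((2:ℕ):ℝ) by norm_num, Polynomial.C_eq_natCast]
      norm_num
    rw [h2c, ← Polynomial.C_mul]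
    norm_num
  rw [← mul_assoc, this, one_mul]

lemma expand (B' : ℕ) : ∀ h, h < B' + 2 →
    (X : ℝ[X])^h = ∑ g ∈ range (B' + 3), Polynomial.C (c h g) * T ℝ (g:ℤ) := by
  intro h
  induction h with
  | zero =>
    intro _
    rw [Finset.sum_eq_single 0]
    · show (1:ℝ[X]) = Polynomial.C (c 0 0) * T ℝ 0
      simp [c, T_zero]
    · intro g _ hg
      match g, hg with
      | g+1, _ =>
        show Polynomial.C (c 0 (g+1)) * T ℝ ((g+1:ℕ):ℤ) = 0
        show Polynomial.C 0 * T ℝ ((g+1:ℕ):ℤ) = 0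
        simp
    · intro habs
      exact absurd (Finset.mem_range.mpr (by omega)) habs
  | succ h ih =>
    intro hlt
    have ih' := ih (by omega)
    have hchB : c h (B'+2) = 0 := c_eq_zero _ _ (by omega)
    have hchB3 : c h (B'+3) = 0 := c_eq_zero _ _ (by omega)
    -- step 1 : multiply by X
    have step1 : (X:ℝ[X])^(h+1)
        = ∑ g ∈ range (B'+3), (Polynomial.C (c h g / 2) * T ℝ ((g:ℤ)+1)
            + Polynomial.C (c h g / 2) * T ℝ ((g:ℤ)-1)) := by
      rw [pow_succ, ih', Finset.sum_mul]
      apply Finset.sum_congr rfl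
      intro g _
      rw [mul_comm, ← mul_assoc, mul_comm (X:ℝ[X]), mul_assoc, xT (g:ℤ)]
      rw [div_eq_mul_inv, Polynomial.C_mul]
      ring
    rw [step1, Finset.sum_add_distrib]
    -- S1 analysis
    have hS1 : (∑ g ∈ range (B'+3), Polynomial.C (c h g / 2) * T ℝ ((g:ℤ)+1))
        = (∑ g ∈ range (B'+1), Polynomial.C (c h (g+1) / 2) * T ℝ ((g:ℤ)+2))
          + Polynomial.C (c h 0 / 2) * T ℝ 1 := by
      rw [Finset.sum_range_succ, hchB, Finset.sum_range_succ']
      simp only [zero_div, map_zero, zero_mul, add_zero]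
      push_cast
      ring_nf
      try congr 1 <;> try (apply Finset.sum_congr rfl; intro x _; congr 2 <;> try ring)
      all_goals try rfl
      all_goals try ring
      all_goals try (congr 1; apply Finset.sum_congr rfl; intro x _; congr 2 <;> try ring)
      all_goals try rfl
    -- S2 analysis
    have hS2 : (∑ g ∈ range (B'+3), Polynomial.C (c h g / 2) * T ℝ ((g:ℤ)-1))
        = ((∑ g ∈ range B', Polynomial.C (c h (g+3) / 2) * T ℝ ((g:ℤ)+2))
            + Polynomial.C (c h 2 / 2) * T ℝ 1)
          + Polynomial.C (c h 1 / 2) * T ℝ 0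
          + Polynomial.C (c h 0 / 2) * T ℝ 1 := by
      rw [Finset.sum_range_succ', Finset.sum_range_succ', Finset.sum_range_succ']
      have hneg : T ℝ (((0:ℕ):ℤ) - 1) = T ℝ 1 := by
        rw [show ((0:ℕ):ℤ) - 1 = -(1:ℤ) by norm_num, Polynomial.Chebyshev.T_neg]
      rw [hneg]
      push_cast
      ring_nf
      try congr 1 <;> try (apply Finset.sum_congr rfl; intro x _; congr 2 <;> try ring)
      all_goals try rfl
      all_goals try (
        have hmm : (∑ x ∈ range B', Polynomial.C (c h (x + 1 + 1 + 1) / 2) * T ℝ ((x:ℤ) + 1 + 1 + 1 - 1))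
            = ∑ x ∈ range B', Polynomial.C (c h (x + 3) / 2) * T ℝ ((x:ℤ) + 2) := by
          apply Finset.sum_congr rfl
          intro x _
          have e1 : x + 1 + 1 + 1 = x + 3 := by omega
          have e2 : ((x:ℤ) + 1 + 1 + 1 - 1) = (x:ℤ) + 2 := by ring
          rw [e1, e2]
        rw [hmm])
      all_goals try ring
      all_goals try (congr 1; apply Finset.sum_congr rfl; intro x _; congr 2 <;> try ring)
      all_goals try rfl
    -- target analysis
    have hT : ∑ g ∈ range (B'+3), Polynomial.C (c (h+1) g) * T ℝ (g:ℤ)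
        = (∑ g ∈ range (B'+1), Polynomial.C ((c h (g+1) + c h (g+3))/2) * T ℝ ((g:ℤ)+2))
          + Polynomial.C (c h 0 + c h 2 / 2) * T ℝ 1
          + Polynomial.C (c h 1 / 2) * T ℝ 0 := by
      rw [Finset.sum_range_succ', Finset.sum_range_succ']
      simp only [c]
      push_cast
      ring_nf
      try congr 1 <;> try (apply Finset.sum_congr rfl; intro x _; congr 2 <;> try ring)
      all_goals try rfl
      all_goals try ring
      all_goals try (congr 1; apply Finset.sum_congr rfl; intro x _; congr 2 <;> try ring)
      all_goals try rfl
    rw [hS1, hS2, hT]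
    -- split the main sum
    have hsplit : (∑ g ∈ range (B'+1), Polynomial.C ((c h (g+1) + c h (g+3))/2) * T ℝ ((g:ℤ)+2))
        = (∑ g ∈ range (B'+1), Polynomial.C (c h (g+1)/2) * T ℝ ((g:ℤ)+2))
          + ((∑ g ∈ range B', Polynomial.C (c h (g+3)/2) * T ℝ ((g:ℤ)+2))) := by
      have hterm : ∀ g ∈ range (B'+1), Polynomial.C ((c h (g+1) + c h (g+3))/2) * T ℝ ((g:ℤ)+2)
          = Polynomial.C (c h (g+1)/2) * T ℝ ((g:ℤ)+2)
            + Polynomial.C (c h (g+3)/2) * T ℝ ((g:ℤ)+2) := by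
        intro g _
        rw [show (c h (g+1) + c h (g+3))/2 = c h (g+1)/2 + c h (g+3)/2 by ring, map_add]
        ring
      rw [Finset.sum_congr rfl hterm, Finset.sum_add_distrib]
      congr 1
      rw [Finset.sum_range_succ, hchB3]
      simp
    rw [hsplit]
    have hc02 : Polynomial.C (c h 0 + c h 2 / 2)
        = Polynomial.C (c h 0 / 2) + Polynomial.C (c h 0 / 2) + Polynomial.C (c h 2 / 2) := by
      rw [← map_add, ← map_add]
      congr 1
      ring
    rw [hc02]
    ring



lemma T_aux : ∀ m : ℕ, ∀ a : ℕ,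
    ((m + a) % 2 = 1 → (T ℝ (m:ℤ)).coeff a = 0) ∧
    (m < a → (T ℝ (m:ℤ)).coeff a = 0) ∧
    (∀ r, m = a + 2*r → |(T ℝ (m:ℤ)).coeff a| ≤ 2^a * ((a+r).choose r : ℝ)) := by
  intro m
  induction m using Nat.strong_induction_on with
  | _ m ih =>
    match m with
    | 0 =>
      intro a
      have h0 : (T ℝ ((0:ℕ):ℤ)) = 1 := by
        norm_num [Polynomial.Chebyshev.T_zero]
      rw [h0]
      refine ⟨?_, ?_, ?_⟩
      · intro hpar
        have ha : a ≠ 0 := by omega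
        simp [Polynomial.coeff_one, ha]
      · intro ha
        have ha' : a ≠ 0 := by omega
        simp [Polynomial.coeff_one, ha']
      · intro r hr
        have ha : a = 0 := by omega
        have hrr : r = 0 := by omega
        subst ha; subst hrr
        simp [Polynomial.coeff_one]
    | 1 =>
      intro a
      have h1 : (T ℝ ((1:ℕ):ℤ)) = X := by
        norm_num [Polynomial.Chebyshev.T_one]
      rw [h1]
      refine ⟨?_, ?_, ?_⟩
      · intro hpar
        have ha : a ≠ 1 := by omega
        rw [Polynomial.coeff_X, if_neg (fun h => ha h.symm)]
      · intro ha
        have ha' : a ≠ 1 := by omega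
        rw [Polynomial.coeff_X, if_neg (fun h => ha' h.symm)]
      · intro r hr
        have ha : a = 1 := by omega
        subst ha
        rw [Polynomial.coeff_X, if_pos rfl]
        have hrr : r = 0 := by omega
        subst hrr
        norm_num
    | (m+2) =>
      intro a
      have ihm1 := ih (m+1) (by omega)
      have ihm := ih m (by omega)
      have hrec : T ℝ ((m+2 : ℕ):ℤ) = 2*X*T ℝ ((m+1:ℕ):ℤ) - T ℝ (m:ℤ) := by
        have h := Polynomial.Chebyshev.T_add_two ℝ (m:ℤ)
        have e1 : ((m+2:ℕ):ℤ) = (m:ℤ) + 2 := by push_cast; ring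
        have e2 : ((m+1:ℕ):ℤ) = (m:ℤ) + 1 := by push_cast; ring
        rw [e1, e2, h]
      have hC2 : (2:ℝ[X]) = Polynomial.C (2:ℝ) := by
        rw [show (2:ℝ) = ((2:ℕ):ℝ) by norm_num, Polynomial.C_eq_natCast]
        norm_num
      have hc : ∀ b : ℕ, (T ℝ ((m+2:ℕ):ℤ)).coeff b
          = 2 * ((X * T ℝ ((m+1:ℕ):ℤ)).coeff b) - (T ℝ (m:ℤ)).coeff b := by
        intro b
        rw [hrec, Polynomial.coeff_sub]
        congr 1
        rw [show (2:ℝ[X])*X*T ℝ ((m+1:ℕ):ℤ) = Polynomial.C (2:ℝ) * (X * T ℝ ((m+1:ℕ):ℤ)) by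
          rw [← hC2]; ring]
        rw [Polynomial.coeff_C_mul]
      refine ⟨?_, ?_, ?_⟩
      · intro hpar
        rw [hc a]
        match a with
        | 0 =>
          rw [mul_comm X, Polynomial.coeff_mul_X_zero]
          rw [(ihm 0).1 (by omega)]
          ring
        | a+1 =>
          rw [Polynomial.coeff_X_mul]
          rw [(ihm1 a).1 (by omega), (ihm (a+1)).1 (by omega)]
          ring
      · intro hbig
        rw [hc a]
        match a, hbig with
        | a+1, hbig =>
          rw [Polynomial.coeff_X_mul]
          rw [(ihm1 a).2.1 (by omega), (ihm (a+1)).2.1 (by omega)]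
          ring
      · intro r hr
        rw [hc a]
        match a with
        | 0 =>
          rw [mul_comm X, Polynomial.coeff_mul_X_zero]
          have hrpos : 1 ≤ r := by omega
          have hm2r : m = 0 + 2*(r-1) := by omega
          have := (ihm 0).2.2 (r-1) hm2r
          rw [mul_zero, zero_sub, abs_neg]
          calc |(T ℝ (m:ℤ)).coeff 0| ≤ 2^0 * ((0 + (r-1)).choose (r-1) : ℝ) := this
            _ ≤ 2^0 * ((0+r).choose r : ℝ) := by
                norm_num [Nat.choose_self]
            _ = _ := by norm_num [Nat.choose_self]
        | a+1 =>
          rw [Polynomial.coeff_X_mul]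
          have h1 : m + 1 = a + 2*r := by omega
          have hb1 := (ihm1 a).2.2 r h1
          have habs : |2 * (T ℝ ((m+1:ℕ):ℤ)).coeff a - (T ℝ (m:ℤ)).coeff (a+1)|
              ≤ 2 * |(T ℝ ((m+1:ℕ):ℤ)).coeff a| + |(T ℝ (m:ℤ)).coeff (a+1)| := by
            calc _ ≤ |2 * (T ℝ ((m+1:ℕ):ℤ)).coeff a| + |(T ℝ (m:ℤ)).coeff (a+1)| :=
                  abs_sub _ _
              _ = _ := by rw [abs_mul]; norm_num
          match r, hr with
          | 0, hr =>
            have hz : (T ℝ (m:ℤ)).coeff (a+1) = 0 := (ihm (a+1)).2.1 (by omega)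
            rw [hz, sub_zero, abs_mul]
            rw [show |(2:ℝ)| = 2 by norm_num]
            calc 2 * |(T ℝ ((m+1:ℕ):ℤ)).coeff a| ≤ 2 * (2^a * ((a+0).choose 0 : ℝ)) := by
                  linarith [hb1]
              _ = 2^(a+1) * (((a+1)+0).choose 0 : ℝ) := by
                  simp [Nat.choose_zero_right, pow_succ]
                  ring
          | r+1, hr =>
            have hm' : m = (a+1) + 2*r := by omega
            have hb2 := (ihm (a+1)).2.2 r hm'
            refine le_trans habs ?_
            have key : (2:ℝ) * (2^a * ((a+(r+1)).choose (r+1) : ℝ))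
                + 2^(a+1) * (((a+1)+r).choose r : ℝ)
                = 2^(a+1) * (((a+1)+(r+1)).choose (r+1) : ℝ) := by
              have hpascal : ((a+1)+(r+1)).choose (r+1)
                  = ((a+1)+r).choose r + ((a+1)+r).choose (r+1) := by
                have : (a+1)+(r+1) = ((a+1)+r)+1 := by omega
                rw [this, Nat.choose_succ_succ]
              rw [hpascal]
              have : (a+(r+1)) = (a+1)+r := by omega
              rw [this]
              push_cast
              ring
            rw [← key]
            have : 2 * |(T ℝ ((m+1:ℕ):ℤ)).coeff a| ≤ 2 * (2^a * ((a+(r+1)).choose (r+1) : ℝ)) := by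
              linarith [hb1]
            linarith [hb2, this]



lemma Qsum : ∀ a B : ℕ, ∑ ρ ∈ range (B+1), ((a+ρ).choose ρ : ℝ) * (1/4)^ρ ≤ (4/3)^(a+1) := by
  intro a
  induction a with
  | zero =>
    intro B
    calc ∑ ρ ∈ range (B+1), ((0+ρ).choose ρ : ℝ) * (1/4)^ρ
        = ∑ ρ ∈ range (B+1), ((1:ℝ)/4)^ρ := by
          apply Finset.sum_congr rfl
          intro ρ _
          rw [zero_add, Nat.choose_self]
          norm_num
      _ = (((1:ℝ)/4)^(B+1) - 1) / ((1/4) - 1) := geom_sum_eq (by norm_num) _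
      _ ≤ (4/3)^(0+1) := by
          have h0 : (0:ℝ) ≤ (1/4:ℝ)^(B+1) := by positivity
          rw [div_le_iff_of_neg (by norm_num)]
          nlinarith
  | succ a iha =>
    intro B
    induction B with
    | zero =>
      rw [show (0:ℕ)+1 = 1 from rfl, Finset.sum_range_one]
      norm_num [Nat.choose_zero_right]
      calc (1:ℝ) ≤ (4/3)^(a+2) := one_le_pow₀ (by norm_num)
        _ = _ := by ring_nf
    | succ B ihB =>
      rw [Finset.sum_range_succ']
      have hsplit : ∀ ρ ∈ range (B+1), ((a+1+(ρ+1)).choose (ρ+1) : ℝ) * (1/4)^(ρ+1)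
          = ((a+(ρ+1)).choose (ρ+1) : ℝ) * (1/4)^(ρ+1)
            + (1/4) * (((a+1+ρ).choose ρ : ℝ) * (1/4)^ρ) := by
        intro ρ _
        have hp : (a+1+(ρ+1)).choose (ρ+1) = (a+1+ρ).choose ρ + (a+1+ρ).choose (ρ+1) := by
          rw [show a+1+(ρ+1) = (a+1+ρ)+1 by omega, Nat.choose_succ_succ']
        have he : a+1+ρ = a+(ρ+1) := by omega
        rw [hp, he]
        push_cast
        ring
      rw [Finset.sum_congr rfl hsplit, Finset.sum_add_distrib]
      have key1 : (∑ ρ ∈ range (B+1), ((a+(ρ+1)).choose (ρ+1) : ℝ) * (1/4)^(ρ+1))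
          + ((a+1+0).choose 0 : ℝ) * (1/4)^0 ≤ (4/3)^(a+1) := by
        have h1 : (∑ ρ ∈ range (B+1), ((a+(ρ+1)).choose (ρ+1) : ℝ) * (1/4)^(ρ+1))
            + ((a+1+0).choose 0 : ℝ) * (1/4)^0
            = ∑ ρ ∈ range (B+2), ((a+ρ).choose ρ : ℝ) * (1/4)^ρ := by
          rw [Finset.sum_range_succ' (fun ρ => ((a+ρ).choose ρ : ℝ) * (1/4)^ρ) (B+1)]
          norm_num
        rw [h1]
        exact iha (B+1)
      have key2 : (∑ ρ ∈ range (B+1), (1/4) * (((a+1+ρ).choose ρ : ℝ) * (1/4)^ρ))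
          ≤ (1/4) * (4/3)^(a+2) := by
        rw [← Finset.mul_sum]
        have := ihB
        have h4 : (0:ℝ) < 1/4 := by norm_num
        calc (1/4) * (∑ ρ ∈ range (B+1), ((a+1+ρ).choose ρ : ℝ) * (1/4)^ρ)
            ≤ (1/4) * (4/3)^(a+1+1) := by
              apply mul_le_mul_of_nonneg_left ihB (by norm_num)
          _ = (1/4) * (4/3)^(a+2) := by norm_num
      have hfin : (4:ℝ)/3 * (4/3)^(a+1) = (4/3)^(a+2) := (pow_succ' ((4:ℝ)/3) (a+1)).symm
      calc (∑ ρ ∈ range (B+1), ((a+(ρ+1)).choose (ρ+1) : ℝ) * (1/4)^(ρ+1))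
            + (∑ ρ ∈ range (B+1), (1/4) * (((a+1+ρ).choose ρ : ℝ) * (1/4)^ρ))
            + ((a+1+0).choose 0 : ℝ) * (1/4)^0
          ≤ (4/3)^(a+1) + (1/4) * (4/3)^(a+2) := by linarith
        _ = (4/3)^(a+1+1) := by
            rw [show a+1+1 = a+2 from rfl, ← hfin]
            ring

lemma sum_even (u : ℕ → ℝ) : ∀ R : ℕ,
    ∑ e ∈ range (2*R), (if Even e then u (e/2) else 0) = ∑ r ∈ range R, u r := by
  intro R
  induction R with
  | zero => simp
  | succ R ih =>
    have h2 : 2*(R+1) = (2*R+1)+1 := by omega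
    rw [h2, Finset.sum_range_succ, Finset.sum_range_succ, Finset.sum_range_succ, ih]
    have hodd : ¬ Even (2*R+1) := by
      simp [Nat.even_add_one, parity_simps]
    rw [if_neg hodd, if_pos (by exact ⟨R, by omega⟩)]
    have : (2*R)/2 = R := by omega
    rw [this]
    ring

lemma fact_mul_fact (x y : ℕ) (hx : 1 ≤ x) (hy : 1 ≤ y) : x ! * y ! ≤ (x + y - 1)! := by
  have hk : y - 1 ≤ x + y - 1 := by omega
  have hfor : (x+y-1) - (y-1) = x := by omega
  have hid : (x+y-1).choose (y-1) * (y-1)! * x ! = (x+y-1)! := by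
    have := Nat.choose_mul_factorial_mul_factorial hk
    rw [hfor] at this
    exact this
  have hy' : y ≤ (x+y-1).choose (y-1) := by
    calc y = y.choose (y-1) := by
          rw [← Nat.choose_symm (by omega : y - 1 ≤ y)]
          rw [show y - (y-1) = 1 by omega, Nat.choose_one_right]
      _ ≤ (x+y-1).choose (y-1) := Nat.choose_le_choose _ (by omega)
  calc x ! * y ! = y * ((y-1)! * x !) := by
        rw [show y ! = y * (y-1)! from by
          rw [show y = (y-1)+1 by omega]
          rw [Nat.factorial_succ]
          congr 1 <;> omega]
        ring
    _ ≤ (x+y-1).choose (y-1) * ((y-1)! * x !) := Nat.mul_le_mul_right _ hy'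
    _ = (x+y-1)! := by rw [← hid]; ring

lemma prod_factorial_le {ι : Type*} [DecidableEq ι] (S : Finset ι) (f : ι → ℕ)
    (hf : ∀ i ∈ S, 1 ≤ f i) :
    ∏ i ∈ S, (f i)! ≤ ((∑ i ∈ S, f i) - S.card + 1)! := by
  induction S using Finset.induction_on with
  | empty => simp
  | insert _ _ hnotmem =>
    rename_i a S ih
    have hfa : 1 ≤ f a := hf a (Finset.mem_insert_self a S)
    have hf' : ∀ i ∈ S, 1 ≤ f i := fun i hi => hf i (Finset.mem_insert_of_mem hi)
    rw [Finset.prod_insert hnotmem, Finset.sum_insert hnotmem, Finset.card_insert_of_notMem hnotmem]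
    have hsum : S.card ≤ ∑ i ∈ S, f i := by
      calc S.card = ∑ _i ∈ S, 1 := by simp
        _ ≤ ∑ i ∈ S, f i := Finset.sum_le_sum hf'
    calc (f a)! * ∏ i ∈ S, (f i)! ≤ (f a)! * ((∑ i ∈ S, f i) - S.card + 1)! :=
          Nat.mul_le_mul_left _ (ih hf')
      _ ≤ (f a + ((∑ i ∈ S, f i) - S.card + 1) - 1)! := fact_mul_fact _ _ hfa (by omega)
      _ = ((f a + ∑ i ∈ S, f i) - (S.card + 1) + 1)! := by congr 1; omega

lemma L2b : ∀ t m : ℕ, ((8:ℝ)/3)^t * ((m+1)! : ℝ) ≤ (9/8)^(t+m+2) * ((t+m+1)! : ℝ) := by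
  intro t
  induction t with
  | zero =>
    intro m
    simp only [pow_zero, one_mul, zero_add]
    have h1 : (1:ℝ) ≤ (9/8)^(m+2) := one_le_pow₀ (by norm_num)
    have hp : (0:ℝ) < ((m+1)! : ℝ) := by exact_mod_cast Nat.factorial_pos (m+1)
    nlinarith
  | succ t ih =>
    intro m
    rcases Nat.eq_zero_or_pos (t + m) with h0 | hpos
    · have ht : t = 0 := by omega
      have hm : m = 0 := by omega
      subst ht; subst hm
      norm_num [Nat.factorial]
    · have step : ((8:ℝ)/3) ≤ (9/8) * ((t+m+2 : ℕ) : ℝ) := by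
        have : (3:ℝ) ≤ ((t+m+2 : ℕ) : ℝ) := by
          have : (3:ℕ) ≤ t+m+2 := by omega
          exact_mod_cast this
        nlinarith
      have hfact : ((t+1+m+1)! : ℝ) = ((t+m+2 : ℕ) : ℝ) * ((t+m+1)! : ℝ) := by
        rw [show t+1+m+1 = (t+m+1)+1 by omega, Nat.factorial_succ]
        push_cast
        ring
      calc ((8:ℝ)/3)^(t+1) * ((m+1)! : ℝ) = (8/3) * (((8:ℝ)/3)^t * ((m+1)! : ℝ)) := by ring
        _ ≤ (8/3) * ((9/8)^(t+m+2) * ((t+m+1)! : ℝ)) := by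
            apply mul_le_mul_of_nonneg_left (ih m) (by norm_num)
        _ ≤ ((9/8) * ((t+m+2 : ℕ) : ℝ)) * ((9/8)^(t+m+2) * ((t+m+1)! : ℝ)) := by
            apply mul_le_mul_of_nonneg_right step
            positivity
        _ = (9/8)^(t+1+m+2) * (((t+m+2 : ℕ) : ℝ) * ((t+m+1)! : ℝ)) := by
            rw [show t+1+m+2 = (t+m+2)+1 by omega, pow_succ]
            ring
        _ = (9/8)^(t+1+m+2) * ((t+1+m+1)! : ℝ) := by rw [hfact]

lemma Fparam (e t m : ℕ) :
    (2:ℝ)^e * (8/3)^((t+m+1)+(t+1)) * ((m+1)! : ℝ)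
      ≤ 3^(((t+m+1)+e)+1) * (((t+m+1))! : ℝ) := by
  have h1 : ((8:ℝ)/3)^((t+m+1)+(t+1)) = (8/3)^(t+m+2) * (8/3)^t := by
    rw [← pow_add]
    congr 1
    omega
  have h2 := L2b t m
  have h89 : ((8:ℝ)/3)^(t+m+2) * (9/8)^(t+m+2) = 3^(t+m+2) := by
    rw [← mul_pow]
    norm_num
  have h2e : (2:ℝ)^e ≤ 3^e := by
    apply pow_le_pow_left₀ (by norm_num) (by norm_num)
  calc (2:ℝ)^e * (8/3)^((t+m+1)+(t+1)) * ((m+1)! : ℝ)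
      = (2:ℝ)^e * (8/3)^(t+m+2) * ((8/3)^t * ((m+1)! : ℝ)) := by rw [h1]; ring
    _ ≤ (2:ℝ)^e * (8/3)^(t+m+2) * ((9/8)^(t+m+2) * ((t+m+1)! : ℝ)) := by
        apply mul_le_mul_of_nonneg_left h2
        positivity
    _ = (2:ℝ)^e * 3^(t+m+2) * ((t+m+1)! : ℝ) := by rw [← h89]; ring
    _ ≤ (3:ℝ)^e * 3^(t+m+2) * ((t+m+1)! : ℝ) := by
        apply mul_le_mul_of_nonneg_right
        · apply mul_le_mul_of_nonneg_right h2e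
          positivity
        · positivity
    _ = 3^(((t+m+1)+e)+1) * (((t+m+1))! : ℝ) := by
        rw [← pow_add]
        congr 2
        omega

lemma expand_small (h : ℕ) :
    (X : ℝ[X])^h = ∑ g ∈ range (h + 1), Polynomial.C (c h g) * T ℝ (g:ℤ) := by
  rw [expand h h (by omega)]
  symm
  apply Finset.sum_subset (Finset.range_subset_range.mpr (by omega))
  intro g _ hg
  have : ¬ g < h + 1 := fun hc => hg (Finset.mem_range.mpr hc)
  rw [c_eq_zero h g (by omega)]
  simp

lemma cT_delta (dd h a : ℕ) (hh : h ≤ dd) :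
    ∑ g ∈ range (dd+1), c h g * (T ℝ (g:ℤ)).coeff a = if h = a then 1 else 0 := by
  have h1 : ∑ g ∈ range (h+1), c h g * (T ℝ (g:ℤ)).coeff a = ((X:ℝ[X])^h).coeff a := by
    rw [expand_small h, Polynomial.finset_sum_coeff]
    apply Finset.sum_congr rfl
    intro g _
    rw [Polynomial.coeff_C_mul]
  have h2 : ∑ g ∈ range (dd+1), c h g * (T ℝ (g:ℤ)).coeff a
      = ∑ g ∈ range (h+1), c h g * (T ℝ (g:ℤ)).coeff a := by
    symm
    apply Finset.sum_subset (Finset.range_subset_range.mpr (by omega))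
    intro g _ hg
    have : ¬ g < h + 1 := fun hc => hg (Finset.mem_range.mpr hc)
    rw [c_eq_zero h g (by omega)]
    ring
  rw [h2, h1, Polynomial.coeff_X_pow]
  by_cases hha : h = a
  · simp [hha]
  · rw [if_neg hha, if_neg (fun hc => hha hc.symm)]

lemma cos_pow_expand (h : ℕ) (θ : ℝ) :
    (Real.cos θ)^h = ∑ g ∈ range (h + 1), c h g * Real.cos (g * θ) := by
  have := congrArg (Polynomial.eval (Real.cos θ)) (expand_small h)
  rw [Polynomial.eval_pow, Polynomial.eval_X, Polynomial.eval_finset_sum] at this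
  rw [this]
  apply Finset.sum_congr rfl
  intro g _
  rw [Polynomial.eval_mul, Polynomial.eval_C, Polynomial.Chebyshev.T_real_cos]
  norm_num

lemma V1 (d h g : ℕ) (hh : h ≤ d) (hg : g ≤ d) :
    ∑ j ∈ range (d+1), (Real.cos (th (d+1) j))^h * Real.cos (g * th (d+1) j)
      = c h g * (if g = 0 then ((d+1:ℕ):ℝ) else ((d+1:ℕ):ℝ)/2) := by
  have step1 : ∀ j ∈ range (d+1), (Real.cos (th (d+1) j))^h * Real.cos (g * th (d+1) j)
      = ∑ g' ∈ range (h+1), c h g' *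
          (Real.cos (g' * th (d+1) j) * Real.cos (g * th (d+1) j)) := by
    intro j _
    rw [cos_pow_expand h, Finset.sum_mul]
    apply Finset.sum_congr rfl
    intro g' _
    ring
  rw [Finset.sum_congr rfl step1, Finset.sum_comm]
  have step2 : ∀ g' ∈ range (h+1),
      (∑ j ∈ range (d+1), c h g' * (Real.cos (g' * th (d+1) j) * Real.cos (g * th (d+1) j)))
      = c h g' * (if g' = g then (if g' = 0 then ((d+1:ℕ):ℝ) else ((d+1:ℕ):ℝ)/2) else 0) := by
    intro g' hg'
    rw [← Finset.mul_sum]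
    congr 1
    have hg'd : g' < d+1 := by
      have := Finset.mem_range.mp hg'
      omega
    have : (((d+1:ℕ)):ℝ) = ((d+1:ℕ):ℝ) := rfl
    exact_mod_cast orth hg'd (by omega)
  rw [Finset.sum_congr rfl step2]
  by_cases hgh : g ≤ h
  · rw [Finset.sum_eq_single g]
    · simp
    · intro g' _ hne
      rw [if_neg hne]
      ring
    · intro habs
      exact absurd (Finset.mem_range.mpr (by omega)) habs
  · have hz : c h g = 0 := c_eq_zero h g (by omega)
    rw [hz, zero_mul]
    apply Finset.sum_eq_zero
    intro g' hg'
    have : g' ≠ g := by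
      have := Finset.mem_range.mp hg'
      omega
    rw [if_neg this]
    ring

noncomputable def ptv (n d : ℕ) (α : Fin n →₀ ℕ) (i : Fin n) (j' : ℕ) : ℝ :=
  if α i ≠ 0 then Real.cos (th (d+1) j') else 0

noncomputable def Kf (n d : ℕ) (α : Fin n →₀ ℕ) (i : Fin n) (g : ℕ) (j' : ℕ) : ℝ :=
  if α i ≠ 0 then Real.cos (g * th (d+1) j') else (if g = 0 then 1 else 0)

noncomputable def epsF (n : ℕ) (α : Fin n →₀ ℕ) (i : Fin n) (g : ℕ) : ℝ :=
  if α i ≠ 0 then (if g = 0 then 1 else 2) else 1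

noncomputable def Dfac (n : ℕ) (α : Fin n →₀ ℕ) (i : Fin n) (h g : ℕ) : ℝ :=
  if α i ≠ 0 then c h g else ((0:ℝ)^h * (if g = 0 then 1 else 0))

noncomputable def tau (n : ℕ) (α : Fin n →₀ ℕ) (i : Fin n) (g : ℕ) : ℝ :=
  if α i ≠ 0 then (T ℝ (g:ℤ)).coeff (α i) else 1

noncomputable def acoef (n d : ℕ) (p : MvPolynomial (Fin n) ℝ) (α : Fin n →₀ ℕ)
    (γ : Fin n → ℕ) : ℝ :=
  (∏ i, epsF n α i (γ i)) / ((d+1:ℕ):ℝ)^n *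
    ∑ j : Fin n → Fin (d+1),
      (MvPolynomial.eval (fun i => ptv n d α i (j i)) p) * ∏ i, Kf n d α i (γ i) (j i)

lemma pervar_eq (n d : ℕ) (α : Fin n →₀ ℕ) (i : Fin n) (h g : ℕ) (hh : h ≤ d) (hg : g ≤ d) :
    epsF n α i g * (∑ j' ∈ range (d+1), (ptv n d α i j')^h * Kf n d α i g j') / ((d+1:ℕ):ℝ)
      = Dfac n α i h g := by
  have hN : ((d+1:ℕ):ℝ) ≠ 0 := by positivity
  by_cases ha : α i ≠ 0
  · simp only [ptv, Kf, epsF, Dfac, if_pos ha]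
    rw [V1 d h g hh hg]
    by_cases hg0 : g = 0
    · rw [if_pos hg0, if_pos hg0]
      field_simp
    · rw [if_neg hg0, if_neg hg0]
      field_simp
      try ring
  · simp only [ptv, Kf, epsF, Dfac, if_neg ha]
    rw [Finset.sum_const, Finset.card_range]
    rw [one_mul]
    rw [nsmul_eq_mul]
    field_simp

lemma amon (n d : ℕ) (p : MvPolynomial (Fin n) ℝ) (α : Fin n →₀ ℕ)
    (hdeg : p.totalDegree ≤ d) (γ : Fin n → ℕ) (hγ : ∀ i, γ i ≤ d) :
    acoef n d p α γ
      = ∑ η ∈ p.support, MvPolynomial.coeff η p * ∏ i, Dfac n α i (η i) (γ i) := by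
  have hN : ((d+1:ℕ):ℝ) ≠ 0 := by positivity
  have hsupp : ∀ η ∈ p.support, ∀ i, η i ≤ d := by
    intro η hη i
    calc η i ≤ ∑ i', η i' := Finset.single_le_sum (fun _ _ => Nat.zero_le _) (Finset.mem_univ i)
      _ = η.sum fun _ e => e := by
          rw [Finsupp.sum_fintype]
          intro _; rfl
      _ ≤ p.totalDegree := MvPolynomial.le_totalDegree hη
      _ ≤ d := hdeg
  -- expand eval of p at nodes
  have heval : ∀ j : Fin n → Fin (d+1),
      MvPolynomial.eval (fun i => ptv n d α i (j i)) p
        = ∑ η ∈ p.support, MvPolynomial.coeff η p * ∏ i, (ptv n d α i (j i))^(η i) := by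
    intro j
    conv_lhs => rw [MvPolynomial.as_sum p]
    rw [map_sum]
    apply Finset.sum_congr rfl
    intro η _
    rw [MvPolynomial.eval_monomial]
    congr 1
    rw [Finsupp.prod_fintype]
    intro i
    exact pow_zero _
  unfold acoef
  rw [Finset.sum_congr rfl (fun j _ => by rw [heval j, Finset.sum_mul])]
  rw [Finset.sum_comm]
  rw [Finset.mul_sum]
  apply Finset.sum_congr rfl
  intro η hη
  -- factorize over variables
  have hfact : ∀ j : Fin n → Fin (d+1),
      (MvPolynomial.coeff η p * ∏ i, (ptv n d α i (j i))^(η i)) * ∏ i, Kf n d α i (γ i) (j i)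
      = MvPolynomial.coeff η p * ∏ i, ((ptv n d α i (j i))^(η i) * Kf n d α i (γ i) (j i)) := by
    intro j
    rw [Finset.prod_mul_distrib]
    ring
  rw [Finset.sum_congr rfl (fun j _ => hfact j), ← Finset.mul_sum]
  have hswap : (∑ j : Fin n → Fin (d+1), ∏ i, ((ptv n d α i (j i))^(η i) * Kf n d α i (γ i) (j i)))
      = ∏ i, ∑ j' : Fin (d+1), ((ptv n d α i (j':ℕ))^(η i) * Kf n d α i (γ i) (j':ℕ)) := by
    rw [Finset.prod_univ_sum]
    rw [Fintype.piFinset_univ]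
  rw [hswap]
  -- now distribute the eps/N^n factor
  have hprodN : ((d+1:ℕ):ℝ)^n = ∏ _i : Fin n, ((d+1:ℕ):ℝ) := by
    rw [Finset.prod_const, Finset.card_univ, Fintype.card_fin]
  rw [hprodN]
  rw [show ((∏ i, epsF n α i (γ i)) / (∏ _i : Fin n, ((d+1:ℕ):ℝ))) = ∏ i, (epsF n α i (γ i) / ((d+1:ℕ):ℝ)) by
    rw [Finset.prod_div_distrib]]
  rw [mul_comm (∏ i, (epsF n α i (γ i) / ((d+1:ℕ):ℝ))), mul_assoc, ← Finset.prod_mul_distrib]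
  congr 1
  rw [← Finset.prod_congr rfl (fun i _ => pervar_eq n d α i (η i) (γ i) (hsupp η hη i) (hγ i))]
  apply Finset.prod_congr rfl
  intro i _
  rw [← Finset.sum_range (fun j' => (ptv n d α i j')^(η i) * Kf n d α i (γ i) j')]
  field_simp

lemma pervar_delta (n d : ℕ) (α : Fin n →₀ ℕ) (i : Fin n) (h : ℕ) (hh : h ≤ d) :
    ∑ g ∈ range (d+1), Dfac n α i h g * tau n α i g = if h = α i then 1 else 0 := by
  by_cases ha : α i ≠ 0
  · simp only [Dfac, tau, if_pos ha]
    exact cT_delta d h (α i) hh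
  · simp only [Dfac, tau, if_neg ha]
    push_neg at ha
    rw [Finset.sum_eq_single 0]
    · rw [if_pos rfl, mul_one, mul_one, ha]
      by_cases h0 : h = 0
      · simp [h0]
      · rw [if_neg h0, zero_pow h0]
    · intro g _ hg
      rw [if_neg hg]
      ring
    · intro habs
      exact absurd (Finset.mem_range.mpr (by omega)) habs

lemma reproducing (n d : ℕ) (p : MvPolynomial (Fin n) ℝ) (α : Fin n →₀ ℕ)
    (hdeg : p.totalDegree ≤ d) :
    MvPolynomial.coeff α p
      = ∑ γ ∈ Fintype.piFinset (fun _ : Fin n => range (d+1)),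
          acoef n d p α γ * ∏ i, tau n α i (γ i) := by
  have hsupp : ∀ η ∈ p.support, ∀ i, η i ≤ d := by
    intro η hη i
    calc η i ≤ ∑ i', η i' := Finset.single_le_sum (fun _ _ => Nat.zero_le _) (Finset.mem_univ i)
      _ = η.sum fun _ e => e := by
          rw [Finsupp.sum_fintype]
          intro _; rfl
      _ ≤ p.totalDegree := MvPolynomial.le_totalDegree hη
      _ ≤ d := hdeg
  have h1 : ∀ γ ∈ Fintype.piFinset (fun _ : Fin n => range (d+1)),
      acoef n d p α γ * ∏ i, tau n α i (γ i)
        = ∑ η ∈ p.support, MvPolynomial.coeff η p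
            * ∏ i, (Dfac n α i (η i) (γ i) * tau n α i (γ i)) := by
    intro γ hγ
    have hγ' : ∀ i, γ i ≤ d := by
      intro i
      have := (Fintype.mem_piFinset.mp hγ) i
      have := Finset.mem_range.mp this
      omega
    rw [amon n d p α hdeg γ hγ', Finset.sum_mul]
    exact Finset.sum_congr rfl fun η _ => by rw [Finset.prod_mul_distrib]; ring
  rw [Finset.sum_congr rfl h1, Finset.sum_comm]
  have h2 : ∀ η ∈ p.support,
      (∑ γ ∈ Fintype.piFinset (fun _ : Fin n => range (d+1)),
        MvPolynomial.coeff η p * ∏ i, (Dfac n α i (η i) (γ i) * tau n α i (γ i)))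
      = MvPolynomial.coeff η p * (if η = α then 1 else 0) := by
    intro η hη
    rw [← Finset.mul_sum]
    congr 1
    rw [← Finset.prod_univ_sum (fun _ : Fin n => range (d+1))
      (fun i g => Dfac n α i (η i) g * tau n α i g)]
    rw [Finset.prod_congr rfl (fun i _ => pervar_delta n d α i (η i) (hsupp η hη i))]
    rw [Finset.prod_boole]
    by_cases heq : η = α
    · rw [if_pos heq, if_pos]
      intro i _
      rw [heq]
    · rw [if_neg heq, if_neg]
      intro hall
      apply heq
      apply Finsupp.ext
      intro i
      exact hall i (Finset.mem_univ i)
  rw [Finset.sum_congr rfl h2]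
  by_cases hmem : α ∈ p.support
  · rw [Finset.sum_eq_single α]
    · rw [if_pos rfl, mul_one]
    · intro η _ hne
      rw [if_neg hne, mul_zero]
    · intro habs
      exact absurd hmem habs
  · rw [MvPolynomial.notMem_support_iff.mp hmem]
    symm
    apply Finset.sum_eq_zero
    intro η hη
    have : η ≠ α := fun hc => hmem (hc ▸ hη)
    rw [if_neg this, mul_zero]


noncomputable def fw (n : ℕ) (α : Fin n →₀ ℕ) (i : Fin n) (g : ℕ) : ℝ :=
  if α i ≠ 0 then
    (if α i ≤ g then 2 * |(T ℝ (g:ℤ)).coeff (α i)| * (1/2)^(g - α i) else 0)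
  else (if g = 0 then 1 else 0)

lemma fw_nonneg (n : ℕ) (α : Fin n →₀ ℕ) (i : Fin n) (g : ℕ) : 0 ≤ fw n α i g := by
  unfold fw
  split_ifs <;> positivity

def box (n : ℕ) : Set (Fin n → ℝ) := Set.Icc (fun _ => (-1:ℝ)) (fun _ => 1)

lemma pt_mem_box (n d : ℕ) (α : Fin n →₀ ℕ) (j : Fin n → Fin (d+1)) :
    (fun i => ptv n d α i (j i)) ∈ box n := by
  have h1 : ∀ i, (-1:ℝ) ≤ ptv n d α i (j i) := by
    intro i
    unfold ptv
    split_ifs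
    · exact Real.neg_one_le_cos _
    · norm_num
  have h2 : ∀ i, ptv n d α i (j i) ≤ 1 := by
    intro i
    unfold ptv
    split_ifs
    · exact Real.cos_le_one _
    · norm_num
  exact ⟨fun i => h1 i, fun i => h2 i⟩

lemma acoef_abs_le (n d : ℕ) (p : MvPolynomial (Fin n) ℝ) (α : Fin n →₀ ℕ) (M : ℝ)
    (hM : ∀ x ∈ box n, |MvPolynomial.eval x p| ≤ M) (γ : Fin n → ℕ) :
    |acoef n d p α γ| ≤ (∏ i, epsF n α i (γ i)) * M := by
  have hM0 : 0 ≤ M := le_trans (abs_nonneg _) (hM _ (pt_mem_box n d α (fun _ => 0)))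
  have hepsnn : ∀ i, 0 ≤ epsF n α i (γ i) := by
    intro i; unfold epsF; split_ifs <;> norm_num
  have hNpow : (0:ℝ) < ((d+1:ℕ):ℝ)^n := by positivity
  unfold acoef
  rw [abs_mul, abs_div]
  have habs1 : |∏ i, epsF n α i (γ i)| = ∏ i, epsF n α i (γ i) := by
    rw [abs_of_nonneg (Finset.prod_nonneg (fun i _ => hepsnn i))]
  have habs2 : |((d+1:ℕ):ℝ)^n| = ((d+1:ℕ):ℝ)^n := abs_of_nonneg (le_of_lt hNpow)
  rw [habs1, habs2]
  have hsum : |∑ j : Fin n → Fin (d+1),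
      (MvPolynomial.eval (fun i => ptv n d α i (j i)) p) * ∏ i, Kf n d α i (γ i) (j i)|
      ≤ ((d+1:ℕ):ℝ)^n * M := by
    calc |∑ j : Fin n → Fin (d+1),
        (MvPolynomial.eval (fun i => ptv n d α i (j i)) p) * ∏ i, Kf n d α i (γ i) (j i)|
        ≤ ∑ j : Fin n → Fin (d+1),
          |(MvPolynomial.eval (fun i => ptv n d α i (j i)) p) * ∏ i, Kf n d α i (γ i) (j i)| :=
          Finset.abs_sum_le_sum_abs _ _
      _ ≤ ∑ _j : Fin n → Fin (d+1), M := by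
          apply Finset.sum_le_sum
          intro j _
          rw [abs_mul]
          calc |MvPolynomial.eval (fun i => ptv n d α i (j i)) p| * |∏ i, Kf n d α i (γ i) (j i)|
              ≤ M * 1 := by
                apply mul_le_mul (hM _ (pt_mem_box n d α j)) ?_ (abs_nonneg _) hM0
                rw [abs_prod]
                apply Finset.prod_le_one
                · intro i _; exact abs_nonneg _
                · intro i _
                  unfold Kf
                  split_ifs <;> simp [Real.abs_cos_le_one]
            _ = M := mul_one M
      _ = ((d+1:ℕ):ℝ)^n * M := by
          rw [Finset.sum_const, Finset.card_univ]
          rw [nsmul_eq_mul]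
          congr 1
          rw [Fintype.card_fun]
          push_cast
          simp
  calc (∏ i, epsF n α i (γ i)) / ((d+1:ℕ):ℝ)^n * |∑ j : Fin n → Fin (d+1),
        (MvPolynomial.eval (fun i => ptv n d α i (j i)) p) * ∏ i, Kf n d α i (γ i) (j i)|
      ≤ (∏ i, epsF n α i (γ i)) / ((d+1:ℕ):ℝ)^n * (((d+1:ℕ):ℝ)^n * M) := by
        apply mul_le_mul_of_nonneg_left hsum
        exact div_nonneg (Finset.prod_nonneg fun i _ => hepsnn i) (le_of_lt hNpow)
    _ = (∏ i, epsF n α i (γ i)) * M := by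
        field_simp
        try ring

lemma sum_le_d (n d : ℕ) (p : MvPolynomial (Fin n) ℝ) (hdeg : p.totalDegree ≤ d)
    (η : Fin n →₀ ℕ) (hη : η ∈ p.support) : ∑ i, η i ≤ d := by
  calc ∑ i, η i = η.sum fun _ e => e := by
        rw [Finsupp.sum_fintype]
        intro _; rfl
    _ ≤ p.totalDegree := MvPolynomial.le_totalDegree hη
    _ ≤ d := hdeg

lemma acoef_eq_zero_dead (n d : ℕ) (p : MvPolynomial (Fin n) ℝ) (α : Fin n →₀ ℕ)
    (hdeg : p.totalDegree ≤ d) (γ : Fin n → ℕ) (hγ : ∀ i, γ i ≤ d)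
    (i0 : Fin n) (h0 : α i0 = 0) (hg0 : γ i0 ≠ 0) : acoef n d p α γ = 0 := by
  rw [amon n d p α hdeg γ hγ]
  apply Finset.sum_eq_zero
  intro η _
  rw [Finset.prod_eq_zero (Finset.mem_univ i0)]
  · ring
  · unfold Dfac
    rw [if_neg (by simp [h0]), if_neg hg0]
    ring

lemma acoef_eq_zero_big (n d : ℕ) (p : MvPolynomial (Fin n) ℝ) (α : Fin n →₀ ℕ)
    (hdeg : p.totalDegree ≤ d) (γ : Fin n → ℕ) (hγ : ∀ i, γ i ≤ d)
    (hzero : ∀ i, α i = 0 → γ i = 0) (hbig : d < ∑ i, γ i) : acoef n d p α γ = 0 := by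
  rw [amon n d p α hdeg γ hγ]
  apply Finset.sum_eq_zero
  intro η hη
  have hsum : ∑ i, η i ≤ d := sum_le_d n d p hdeg η hη
  obtain ⟨i0, hi0⟩ : ∃ i, η i < γ i := by
    by_contra hc
    push_neg at hc
    have : ∑ i, γ i ≤ ∑ i, η i := Finset.sum_le_sum fun i _ => hc i
    omega
  rw [Finset.prod_eq_zero (Finset.mem_univ i0)]
  · ring
  · unfold Dfac
    by_cases ha : α i0 ≠ 0
    · rw [if_pos ha]
      exact c_eq_zero _ _ hi0
    · push_neg at ha
      have hz := hzero i0 ha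
      exact absurd hi0 (by omega)

lemma term_bound (n d : ℕ) (p : MvPolynomial (Fin n) ℝ) (α : Fin n →₀ ℕ)
    (hdeg : p.totalDegree ≤ d) (M : ℝ) (hM : ∀ x ∈ box n, |MvPolynomial.eval x p| ≤ M)
    (γ : Fin n → ℕ) (hγd : ∀ i, γ i ≤ d) :
    |acoef n d p α γ * ∏ i, tau n α i (γ i)|
      ≤ M * 2^(d - ∑ i, α i) * ∏ i, fw n α i (γ i) := by
  have hM0 : 0 ≤ M := le_trans (abs_nonneg _) (hM _ (pt_mem_box n d α (fun _ => 0)))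
  have hRHS0 : 0 ≤ M * 2^(d - ∑ i, α i) * ∏ i, fw n α i (γ i) := by
    apply mul_nonneg (by positivity)
    exact Finset.prod_nonneg fun i _ => fw_nonneg n α i (γ i)
  by_cases hbad1 : ∃ i, α i = 0 ∧ γ i ≠ 0
  · obtain ⟨i0, h1, h2⟩ := hbad1
    rw [acoef_eq_zero_dead n d p α hdeg γ hγd i0 h1 h2, zero_mul, abs_zero]
    exact hRHS0
  push_neg at hbad1
  by_cases hbad2 : ∃ i, α i ≠ 0 ∧ γ i < α i
  · obtain ⟨i0, h1, h2⟩ := hbad2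
    have htz : tau n α i0 (γ i0) = 0 := by
      unfold tau
      rw [if_pos h1]
      exact (T_aux (γ i0) (α i0)).2.1 h2
    rw [Finset.prod_eq_zero (Finset.mem_univ i0) htz, mul_zero, abs_zero]
    exact hRHS0
  push_neg at hbad2
  by_cases hbad3 : d < ∑ i, γ i
  · rw [acoef_eq_zero_big n d p α hdeg γ hγd hbad1 hbad3, zero_mul, abs_zero]
    exact hRHS0
  push_neg at hbad3
  -- good case
  have hge : ∀ i, α i ≤ γ i := by
    intro i
    by_cases ha : α i ≠ 0
    · exact hbad2 i ha
    · push_neg at ha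
      omega
  have hfac : ∀ i, epsF n α i (γ i) * |tau n α i (γ i)| = fw n α i (γ i) * 2^(γ i - α i) := by
    intro i
    by_cases ha : α i ≠ 0
    · have hgei : α i ≤ γ i := hge i
      have hγ0 : γ i ≠ 0 := by
        have : α i ≠ 0 := ha
        omega
      unfold epsF tau fw
      rw [if_pos ha, if_pos ha, if_pos ha, if_neg hγ0, if_pos hgei]
      have hcan : ((1:ℝ)/2)^(γ i - α i) * 2^(γ i - α i) = 1 := by
        rw [← mul_pow]
        norm_num
      calc 2 * |(T ℝ ((γ i : ℕ):ℤ)).coeff (α i)|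
          = 2 * |(T ℝ ((γ i : ℕ):ℤ)).coeff (α i)|
            * (((1:ℝ)/2)^(γ i - α i) * 2^(γ i - α i)) := by rw [hcan, mul_one]
        _ = _ := by ring
    · push_neg at ha
      have hz := hbad1 i ha
      unfold epsF tau fw
      rw [if_neg (by simp [ha]), if_neg (by simp [ha]), if_neg (by simp [ha]), if_pos hz]
      rw [ha, hz]
      norm_num
  rw [abs_mul]
  calc |acoef n d p α γ| * |∏ i, tau n α i (γ i)|
      ≤ ((∏ i, epsF n α i (γ i)) * M) * |∏ i, tau n α i (γ i)| := by
        apply mul_le_mul_of_nonneg_right (acoef_abs_le n d p α M hM γ) (abs_nonneg _)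
    _ = M * ∏ i, (epsF n α i (γ i) * |tau n α i (γ i)|) := by
        rw [Finset.abs_prod, Finset.prod_mul_distrib]
        ring
    _ = M * ((∏ i, fw n α i (γ i)) * 2^(∑ i, (γ i - α i))) := by
        rw [Finset.prod_congr rfl (fun i _ => hfac i), Finset.prod_mul_distrib,
          Finset.prod_pow_eq_pow_sum]
    _ ≤ M * ((∏ i, fw n α i (γ i)) * 2^(d - ∑ i, α i)) := by
        apply mul_le_mul_of_nonneg_left ?_ hM0
        apply mul_le_mul_of_nonneg_left ?_
          (Finset.prod_nonneg fun i _ => fw_nonneg n α i (γ i))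
        apply pow_le_pow_right₀ (by norm_num)
        have hsub : ∑ i, (γ i - α i) = ∑ i, γ i - ∑ i, α i :=
          Finset.sum_tsub_distrib _ (fun i _ => hge i)
        omega
    _ = M * 2^(d - ∑ i, α i) * ∏ i, fw n α i (γ i) := by ring

lemma fw_sum_active (n d : ℕ) (α : Fin n →₀ ℕ) (i : Fin n) (ha : α i ≠ 0) :
    ∑ g ∈ range (d+1), fw n α i g ≤ (8/3)^(α i + 1) := by
  set a := α i with hadef
  have h1 : ∑ g ∈ range (d+1), fw n α i g = ∑ g ∈ Finset.Ico a (d+1), fw n α i g := by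
    symm
    apply Finset.sum_subset
    · intro g hg
      rw [Finset.mem_Ico] at hg
      exact Finset.mem_range.mpr hg.2
    · intro g hgr hgn
      rw [Finset.mem_range] at hgr
      rw [Finset.mem_Ico] at hgn
      have hlt : ¬ a ≤ g := by
        intro hc
        exact hgn ⟨hc, hgr⟩
      unfold fw
      rw [if_pos ha, if_neg hlt]
  rw [h1, Finset.sum_Ico_eq_sum_range]
  have h2 : ∀ e, fw n α i (a+e)
      ≤ (if Even e then (2 * 2^a * ((a+e/2).choose (e/2) : ℝ) * (1/4)^(e/2)) else 0) := by
    intro e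
    have hle : a ≤ a + e := Nat.le_add_right a e
    have hsub : a + e - a = e := by omega
    unfold fw
    rw [if_pos ha, if_pos hle, hsub]
    by_cases he : Even e
    · obtain ⟨r, hr⟩ := he
      have her : e = 2*r := by omega
      have hediv : e/2 = r := by omega
      have hb := (T_aux (a+e) a).2.2 r (by omega)
      rw [if_pos ⟨r, hr⟩, hediv]
      have hpow : ((1:ℝ)/2)^e = (1/4)^r := by
        rw [her, pow_mul]
        norm_num
      rw [hpow]
      have hpos : (0:ℝ) ≤ (1/4)^r := by positivity
      calc 2 * |(T ℝ ((a+e:ℕ):ℤ)).coeff a| * (1/4)^r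
          ≤ 2 * (2^a * ((a+r).choose r : ℝ)) * (1/4)^r := by
            apply mul_le_mul_of_nonneg_right ?_ hpos
            apply mul_le_mul_of_nonneg_left hb (by norm_num)
        _ = 2 * 2^a * ((a+r).choose r : ℝ) * (1/4)^r := by ring
    · rw [if_neg he]
      have hodd : (a + e + a) % 2 = 1 := by
        rcases Nat.even_or_odd e with hev | hod
        · exact absurd hev he
        · obtain ⟨r, hr⟩ := hod
          omega
      rw [(T_aux (a+e) a).1 hodd]
      norm_num
  calc ∑ e ∈ range (d+1-a), fw n α i (a+e)
      ≤ ∑ e ∈ range (d+1-a),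
          (if Even e then (2 * 2^a * ((a+e/2).choose (e/2) : ℝ) * (1/4)^(e/2)) else 0) :=
        Finset.sum_le_sum fun e _ => h2 e
    _ ≤ ∑ e ∈ range (2*(d+1)),
          (if Even e then (2 * 2^a * ((a+e/2).choose (e/2) : ℝ) * (1/4)^(e/2)) else 0) := by
        apply Finset.sum_le_sum_of_subset_of_nonneg
        · apply Finset.range_subset_range.mpr
          omega
        · intro e _ _
          split_ifs
          · positivity
          · exact le_refl 0
    _ = ∑ r ∈ range (d+1), 2 * 2^a * ((a+r).choose r : ℝ) * (1/4)^r :=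
        sum_even (fun r => 2 * 2^a * ((a+r).choose r : ℝ) * (1/4)^r) (d+1)
    _ = 2 * 2^a * ∑ r ∈ range (d+1), ((a+r).choose r : ℝ) * (1/4)^r := by
        rw [Finset.mul_sum]
        apply Finset.sum_congr rfl
        intro r _
        ring
    _ ≤ 2 * 2^a * (4/3)^(a+1) := by
        apply mul_le_mul_of_nonneg_left (Qsum a d) (by positivity)
    _ = (8/3)^(a+1) := by
        rw [show (8/3:ℝ) = 2*(4/3) by norm_num, mul_pow, pow_succ]
        ring

lemma fw_sum_dead (n d : ℕ) (α : Fin n →₀ ℕ) (i : Fin n) (ha : ¬ α i ≠ 0) :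
    ∑ g ∈ range (d+1), fw n α i g = 1 := by
  rw [Finset.sum_eq_single 0]
  · unfold fw
    rw [if_neg ha, if_pos rfl]
  · intro g _ hg
    unfold fw
    rw [if_neg ha, if_neg hg]
  · intro habs
    exact absurd (Finset.mem_range.mpr (by omega)) habs


lemma Ffinal (d k s : ℕ) (hsk : s ≤ k) (hkd : k ≤ d) (hs0 : s = 0 → k = 0) :
    (2:ℝ)^(d-k) * (8/3)^(k+s) * ((k-s+1).factorial : ℝ)
      ≤ 3^(d+1) * (k.factorial : ℝ) := by
  match s, hs0 with
  | 0, hs0 =>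
    have hk : k = 0 := hs0 rfl
    subst hk
    simp only [Nat.sub_zero, Nat.factorial]
    norm_num
    calc (2:ℝ)^d ≤ 3^d := by
          apply pow_le_pow_left₀ (by norm_num) (by norm_num)
      _ ≤ 3^(d+1) := by
          apply pow_le_pow_right₀ (by norm_num) (by omega)
  | s'+1, _ =>
    obtain ⟨e, rfl⟩ : ∃ e, d = k + e := ⟨d - k, by omega⟩
    obtain ⟨m, rfl⟩ : ∃ m, k = s' + m + 1 := ⟨k - s' - 1, by omega⟩
    have h1 : s' + m + 1 + e - (s' + m + 1) = e := by omega
    have h2 : s' + m + 1 - (s'+1) + 1 = m + 1 := by omega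
    have h3 : (s'+m+1) + (s'+1) = (s'+m+1)+(s'+1) := rfl
    have h4 : s' + m + 1 + e + 1 = ((s'+m+1)+e)+1 := by omega
    rw [h1, h2, h4]
    exact Fparam e s' m

theorem key (n d : ℕ) (p : MvPolynomial (Fin n) ℝ) (hdeg : p.totalDegree ≤ d)
    (α : Fin n →₀ ℕ) (hα : ∑ i, α i ≤ d)
    (M : ℝ) (hM : ∀ x ∈ box n, |MvPolynomial.eval x p| ≤ M) :
    |MvPolynomial.coeff α p| ≤ 3^(d+1) * (Nat.multinomial Finset.univ α : ℝ) * M := by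
  have hM0 : 0 ≤ M := le_trans (abs_nonneg _) (hM _ (pt_mem_box n d α (fun _ => 0)))
  set k := ∑ i, α i with hk
  set s := α.support.card with hs
  have hsupmem : ∀ i ∈ α.support, 1 ≤ α i := by
    intro i hi
    have := Finsupp.mem_support_iff.mp hi
    omega
  have hsumsub : ∑ i ∈ α.support, α i = k := by
    rw [hk]
    apply Finset.sum_subset (Finset.subset_univ _)
    intro i _ hi
    exact Finsupp.notMem_support_iff.mp hi
  have hsk : s ≤ k := by
    calc s = ∑ _i ∈ α.support, 1 := by rw [hs, Finset.card_eq_sum_ones]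
      _ ≤ ∑ i ∈ α.support, α i := Finset.sum_le_sum hsupmem
      _ = k := hsumsub
  have hs0 : s = 0 → k = 0 := by
    intro h0
    have : α.support = ∅ := Finset.card_eq_zero.mp h0
    rw [← hsumsub, this]
    simp
  -- main chain
  rw [reproducing n d p α hdeg]
  have hγd : ∀ γ ∈ Fintype.piFinset (fun _ : Fin n => range (d+1)), ∀ i, γ i ≤ d := by
    intro γ hγ i
    have := (Fintype.mem_piFinset.mp hγ) i
    have := Finset.mem_range.mp this
    omega
  calc |∑ γ ∈ Fintype.piFinset (fun _ : Fin n => range (d+1)),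
        acoef n d p α γ * ∏ i, tau n α i (γ i)|
      ≤ ∑ γ ∈ Fintype.piFinset (fun _ : Fin n => range (d+1)),
          |acoef n d p α γ * ∏ i, tau n α i (γ i)| := Finset.abs_sum_le_sum_abs _ _
    _ ≤ ∑ γ ∈ Fintype.piFinset (fun _ : Fin n => range (d+1)),
          M * 2^(d-k) * ∏ i, fw n α i (γ i) := by
        apply Finset.sum_le_sum
        intro γ hγ
        exact term_bound n d p α hdeg M hM γ (hγd γ hγ)
    _ = M * 2^(d-k) * ∑ γ ∈ Fintype.piFinset (fun _ : Fin n => range (d+1)),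
          ∏ i, fw n α i (γ i) := by rw [← Finset.mul_sum]
    _ = M * 2^(d-k) * ∏ i, ∑ g ∈ range (d+1), fw n α i g := by
        rw [← Finset.prod_univ_sum (fun _ : Fin n => range (d+1)) (fun i g => fw n α i g)]
    _ ≤ M * 2^(d-k) * (8/3)^(k+s) := by
        apply mul_le_mul_of_nonneg_left ?_ (by positivity)
        have hbnd : ∏ i, ∑ g ∈ range (d+1), fw n α i g
            ≤ ∏ i, (if α i ≠ 0 then ((8:ℝ)/3)^(α i + 1) else 1) := by
          apply Finset.prod_le_prod
          · intro i _
            exact Finset.sum_nonneg fun g _ => fw_nonneg n α i g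
          · intro i _
            by_cases ha : α i ≠ 0
            · rw [if_pos ha]
              exact fw_sum_active n d α i ha
            · rw [if_neg ha, fw_sum_dead n d α i ha]
        refine le_trans hbnd ?_
        have heq : ∏ i, (if α i ≠ 0 then ((8:ℝ)/3)^(α i + 1) else 1)
            = ∏ i ∈ α.support, ((8:ℝ)/3)^(α i + 1) := by
          rw [← Finset.prod_subset (Finset.subset_univ α.support)
            (fun i _ hi => by
              rw [if_neg (by simpa using Finsupp.notMem_support_iff.mp hi)])]
          apply Finset.prod_congr rfl
          intro i hi
          rw [if_pos (Finsupp.mem_support_iff.mp hi)]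
        rw [heq, Finset.prod_pow_eq_pow_sum]
        apply le_of_eq
        congr 1
        rw [Finset.sum_add_distrib, hsumsub, Finset.sum_const, smul_eq_mul, mul_one]
    _ ≤ 3^(d+1) * (Nat.multinomial Finset.univ α : ℝ) * M := by
        rw [mul_comm (3^(d+1) * (Nat.multinomial Finset.univ α : ℝ)) M, mul_assoc]
        apply mul_le_mul_of_nonneg_left ?_ hM0
        -- numeric inequality
        have hP : (∏ i, (α i).factorial) ≤ (k - s + 1).factorial := by
          have heq : ∏ i, (α i).factorial = ∏ i ∈ α.support, (α i).factorial := by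
            symm
            apply Finset.prod_subset (Finset.subset_univ _)
            intro i _ hi
            rw [Finsupp.notMem_support_iff.mp hi]
            rfl
          rw [heq]
          have := prod_factorial_le α.support (fun i => α i) hsupmem
          rwa [hsumsub] at this
        have hspec : ((∏ i, (α i).factorial : ℕ) : ℝ) * (Nat.multinomial Finset.univ α : ℝ)
            = (k.factorial : ℝ) := by
          rw [← Nat.cast_mul]
          rw [Nat.multinomial_spec]
        have hPpos : (0:ℝ) < ((∏ i, (α i).factorial : ℕ) : ℝ) := by
          have : 0 < ∏ i, (α i).factorial := Finset.prod_pos fun i _ => Nat.factorial_pos _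
          exact_mod_cast this
        rw [← mul_le_mul_iff_left₀ hPpos]
        calc 2^(d-k) * (8/3)^(k+s) * ((∏ i, (α i).factorial : ℕ) : ℝ)
            ≤ 2^(d-k) * (8/3)^(k+s) * ((k - s + 1).factorial : ℝ) := by
              apply mul_le_mul_of_nonneg_left ?_ (by positivity)
              exact_mod_cast hP
          _ ≤ 3^(d+1) * (k.factorial : ℝ) := Ffinal d k s hsk hα hs0
          _ = 3^(d+1) * (Nat.multinomial Finset.univ α : ℝ)
                * ((∏ i, (α i).factorial : ℕ) : ℝ) := by
              rw [mul_assoc, mul_comm (Nat.multinomial Finset.univ α : ℝ), hspec]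


end CoeffNormAux

/-- The coefficient norm `‖p‖_{R[x]}`: the maximum (here: supremum) over multi-indices `α` with
`|α| ≤ deg p` of `|β_α| / binom(|α|, α)`, where `β_α` is the coefficient of `x^α` in `p` and
`binom(|α|, α) = |α|!/(α₁!⋯α_n!)` is the multinomial coefficient. -/
noncomputable def coeffNorm {N : ℕ} (p : MvPolynomial (Fin N) ℝ) : ℝ :=
  sSup ((fun α : Fin N →₀ ℕ =>
      |MvPolynomial.coeff α p| / (Nat.multinomial Finset.univ α : ℝ)) ''
    {α : Fin N →₀ ℕ | ∑ i, α i ≤ p.totalDegree})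

/-- If `p` is a real polynomial in `n` variables of total degree at most `d`, then
`‖p‖_{R[x]} ≤ 3^{d+1} · max_{x ∈ [−1,1]^n} |p(x)|`. -/
theorem coeffNorm_le_pow_mul_sup_box (n d : ℕ) (p : MvPolynomial (Fin n) ℝ)
    (hdeg : p.totalDegree ≤ d) :
    coeffNorm p ≤ 3 ^ (d + 1) *
      sSup ((fun x : Fin n → ℝ => |MvPolynomial.eval x p|) ''
        Set.Icc (fun _ => (-1 : ℝ)) (fun _ => (1 : ℝ))) := by
  unfold coeffNorm
  set M := sSup ((fun x : Fin n → ℝ => |MvPolynomial.eval x p|) ''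
      Set.Icc (fun _ => (-1 : ℝ)) (fun _ => (1 : ℝ))) with hMdef
  have hbox0 : (fun _ : Fin n => (0:ℝ)) ∈ Set.Icc (fun _ : Fin n => (-1:ℝ)) (fun _ => 1) :=
    ⟨fun i => by norm_num, fun i => by norm_num⟩
  have hbdd : BddAbove ((fun x : Fin n → ℝ => |MvPolynomial.eval x p|) ''
      Set.Icc (fun _ => (-1 : ℝ)) (fun _ => (1 : ℝ))) := by
    apply IsCompact.bddAbove_image isCompact_Icc
    exact (MvPolynomial.continuous_eval p).abs.continuousOn
  have hM : ∀ x ∈ CoeffNormAux.box n, |MvPolynomial.eval x p| ≤ M := fun x hx =>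
    le_csSup hbdd ⟨x, hx, rfl⟩
  have hM0 : 0 ≤ M := le_trans (abs_nonneg _) (hM _ hbox0)
  apply Real.sSup_le
  · rintro y ⟨α, hα, rfl⟩
    simp only [Set.mem_setOf_eq] at hα
    have hαd : ∑ i, α i ≤ d := le_trans hα hdeg
    have hmult : (0:ℝ) < (Nat.multinomial Finset.univ α : ℝ) := by
      exact_mod_cast Nat.multinomial_pos _ _
    rw [div_le_iff₀ hmult]
    calc |MvPolynomial.coeff α p| ≤ 3^(d+1) * (Nat.multinomial Finset.univ α : ℝ) * M :=
          CoeffNormAux.key n d p hdeg α hαd M hM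
      _ = 3^(d+1) * M * (Nat.multinomial Finset.univ α : ℝ) := by ring
  · exact mul_nonneg (by positivity) hM0

end
end

section
/- Let X ⊆ ℝⁿ and U ⊆ ℝᵐ be compact, β > 0, l : ℝⁿ×ℝᵐ → ℝ and f : ℝⁿ×ℝᵐ → ℝⁿ continuous, and let V : ℝⁿ → ℝ be continuously differentiable and satisfy the Bellman inequality l(x,u) − βV(x) + ∇V(x)·f(x,u) ≥ 0 for all (x,u) ∈ X×U. Then for every x₀ ∈ X and every admissible pair (x(·), u(·)) from x₀ — i.e., u : [0,∞) → U measurable and x : [0,∞) → ℝⁿ with x(t) = x₀ + ∫₀ᵗ f(x(s),u(s)) ds and x(t) ∈ X for all t ≥ 0 — one has V(x₀) ≤ ∫₀^∞ e^{−βt} l(x(t),u(t)) dt. In particular, V(x₀) ≤ V*(x₀) for all x₀ ∈ X, where V* is the value function of the discounted infinite-horizon optimal control problem. -/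
open RealInnerProductSpace MeasureTheory

/-- An admissible pair `(x(·), u(·))` from `x₀`: a measurable control `u` taking values in `U`
on `[0,∞)`, together with a trajectory `x` satisfying `x(t) = x₀ + ∫₀ᵗ f(x(s),u(s)) ds` and
`x(t) ∈ X` for all `t ≥ 0`. -/
def IsAdmissiblePair {n m : ℕ}
    (f : EuclideanSpace ℝ (Fin n) → EuclideanSpace ℝ (Fin m) → EuclideanSpace ℝ (Fin n))
    (X : Set (EuclideanSpace ℝ (Fin n))) (U : Set (EuclideanSpace ℝ (Fin m)))
    (x₀ : EuclideanSpace ℝ (Fin n))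
    (x : ℝ → EuclideanSpace ℝ (Fin n)) (u : ℝ → EuclideanSpace ℝ (Fin m)) : Prop :=
  Measurable u ∧ (∀ t, 0 ≤ t → u t ∈ U) ∧ (∀ t, 0 ≤ t → x t ∈ X) ∧
    ∀ t, 0 ≤ t → x t = x₀ + ∫ s in (0:ℝ)..t, f (x s) (u s)

/-- The discounted infinite-horizon cost `∫₀^∞ e^{−βt} l(x(t),u(t)) dt` of a trajectory. -/
noncomputable def trajCost {n m : ℕ} (β : ℝ)
    (l : EuclideanSpace ℝ (Fin n) → EuclideanSpace ℝ (Fin m) → ℝ)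
    (x : ℝ → EuclideanSpace ℝ (Fin n)) (u : ℝ → EuclideanSpace ℝ (Fin m)) : ℝ :=
  ∫ t in Set.Ioi (0:ℝ), Real.exp (-β * t) * l (x t) (u t)

open MeasureTheory Set intervalIntegral Filter in
private lemma boot {n m : ℕ}
    (f : EuclideanSpace ℝ (Fin n) → EuclideanSpace ℝ (Fin m) → EuclideanSpace ℝ (Fin n))
    (x₀ : EuclideanSpace ℝ (Fin n))
    (x : ℝ → EuclideanSpace ℝ (Fin n)) (u : ℝ → EuclideanSpace ℝ (Fin m))
    (hu : Measurable u)
    (hf : Continuous fun p : EuclideanSpace ℝ (Fin n) × EuclideanSpace ℝ (Fin m) => f p.1 p.2)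
    (C : ℝ) (hC : ∀ s, 0 ≤ s → ‖f (x s) (u s)‖ ≤ C)
    (hxeq : ∀ t, 0 ≤ t → x t = x₀ + ∫ s in (0:ℝ)..t, f (x s) (u s)) :
    ∀ t, 0 ≤ t → IntegrableOn (fun s => f (x s) (u s)) (Set.Ioc 0 t) := by
  set G : ℝ → EuclideanSpace ℝ (Fin n) := fun s => f (x s) (u s) with hG
  by_contra h
  push_neg at h
  obtain ⟨t₀, ht₀, hnint⟩ := h
  set Sc : Set ℝ := {t | 0 ≤ t ∧ ¬ IntegrableOn G (Set.Ioc 0 t)} with hSc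
  have hne : Sc.Nonempty := ⟨t₀, ht₀, hnint⟩
  have hbdd : BddBelow Sc := ⟨0, fun t ht => ht.1⟩
  set b := sInf Sc with hb
  have hb0 : 0 ≤ b := le_csInf hne (fun t ht => ht.1)
  -- everything past b is non-integrable
  have h_after : ∀ t, b < t → ¬ IntegrableOn G (Set.Ioc 0 t) := by
    intro t ht hint
    obtain ⟨t', ht'Sc, ht'lt⟩ := exists_lt_of_csInf_lt hne ht
    exact ht'Sc.2 (hint.mono_set (Set.Ioc_subset_Ioc le_rfl ht'lt.le))
  have h_xconst : ∀ t, b < t → x t = x₀ := by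
    intro t ht
    have ht0 : 0 ≤ t := hb0.trans ht.le
    rw [hxeq t ht0, intervalIntegral.integral_undef, add_zero]
    intro hii
    exact h_after t ht ((intervalIntegrable_iff_integrableOn_Ioc_of_le ht0).mp hii)
  have hmeas0 : Measurable fun s => f x₀ (u s) :=
    (hf.comp (Continuous.prodMk_right x₀)).measurable.comp hu
  have h_int_after : ∀ t, IntegrableOn G (Set.Ioc b t) := by
    intro t
    have : IntegrableOn (fun s => f x₀ (u s)) (Set.Ioc b t) := by
      refine Integrable.mono' (integrable_const C) (hmeas0.aestronglyMeasurable.restrict) ?_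
      filter_upwards [ae_restrict_mem measurableSet_Ioc] with s hs
      have hs0 : 0 ≤ s := hb0.trans hs.1.le
      have := hC s hs0
      rwa [← h_xconst s hs.1]
    refine this.congr_fun (fun s hs => ?_) measurableSet_Ioc
    simp only [hG, h_xconst s hs.1]
  have h_int_before : IntegrableOn G (Set.Ioo 0 b) := by
    rcases eq_or_lt_of_le hb0 with hb0' | hb0'
    · simp [← hb0']
    -- sequence increasing to b
    have hsub : Set.Ioo 0 b ⊆ ⋃ (k : ℕ), Set.Ioc (0:ℝ) (b - b / (k + 2)) := by
      intro s hs
      obtain ⟨k, hk⟩ := exists_nat_gt (b / (b - s))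
      refine Set.mem_iUnion.2 ⟨k, hs.1, ?_⟩
      rw [le_sub_comm]
      rw [div_lt_iff₀ (by linarith [hs.2]) ] at hk
      have hk2 : b ≤ (k + 2) * (b - s) := by nlinarith [hs.2]
      rw [div_le_iff₀ (by positivity)]
      linarith
    have hik : ∀ k : ℕ, IntegrableOn G (Set.Ioc (0:ℝ) (b - b / (k + 2))) := by
      intro k
      by_cases hk : 0 ≤ b - b / (k + 2)
      · by_contra hni
        have : b - b / (k + 2) ∈ Sc := ⟨hk, hni⟩
        have := csInf_le hbdd this
        have hpos : 0 < b / (k + 2) := by positivity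
        linarith
      · push_neg at hk
        rw [Set.Ioc_eq_empty (by intro hlt; exact absurd hlt (not_lt.2 hk.le))]
        · simp
    have hmeasU : AEStronglyMeasurable G (volume.restrict (⋃ (k : ℕ), Set.Ioc (0:ℝ) (b - b / (k + 2)))) :=
      aestronglyMeasurable_iUnion_iff.2 fun k => (hik k).aestronglyMeasurable
    have hmeasOo : AEStronglyMeasurable G (volume.restrict (Set.Ioo 0 b)) :=
      hmeasU.mono_measure (Measure.restrict_mono hsub le_rfl)
    refine Integrable.mono' (integrable_const C) hmeasOo ?_
    filter_upwards [ae_restrict_mem measurableSet_Ioo] with s hs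
    exact hC s hs.1.le
  -- contradiction
  have hb_in : b ≤ t₀ := csInf_le hbdd ⟨ht₀, hnint⟩
  refine hnint ?_
  have hsing : IntegrableOn G ({b} : Set ℝ) := by
    rw [IntegrableOn, Measure.restrict_singleton, Real.volume_singleton]
    simp
  have : IntegrableOn G (Set.Ioo 0 b ∪ {b} ∪ Set.Ioc b t₀) :=
    (h_int_before.union hsing).union (h_int_after t₀)
  refine this.mono_set ?_
  intro s hs
  rcases lt_trichotomy s b with h1 | h1 | h1
  · exact Or.inl (Or.inl ⟨hs.1, h1⟩)
  · exact Or.inl (Or.inr (by simp [h1]))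
  · exact Or.inr ⟨h1, hs.2⟩


open RealInnerProductSpace MeasureTheory Set intervalIntegral Filter in
private lemma lemC {n : ℕ} (β T : ℝ) (hβ : 0 ≤ β) (hT : 0 ≤ T)
    (G : ℝ → EuclideanSpace ℝ (Fin n)) (x₀ : EuclideanSpace ℝ (Fin n))
    (x : ℝ → EuclideanSpace ℝ (Fin n))
    (hGint : IntegrableOn G (Set.Ioc 0 T))
    (hxeq : ∀ t, 0 ≤ t → x t = x₀ + ∫ s in (0:ℝ)..t, G s)
    (hxc : ContinuousOn x (Set.Icc 0 T))
    (W : EuclideanSpace ℝ (Fin n) → ℝ) (hW : ContDiff ℝ 1 W) :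
    W x₀ - Real.exp (-β * T) * W (x T) ≤
      ∫ t in Set.Ioc (0:ℝ) T, Real.exp (-β * t) * (β * W (x t) - ⟪gradient W (x t), G t⟫) := by
  classical
  have hx0 : x 0 = x₀ := by simpa using hxeq 0 le_rfl
  -- compact sets
  set Kx : Set (EuclideanSpace ℝ (Fin n)) := x '' Set.Icc 0 T with hKxdef
  have hKx : IsCompact Kx := isCompact_Icc.image_of_continuousOn hxc
  set K : Set (EuclideanSpace ℝ (Fin n)) := Metric.cthickening 1 Kx with hKdef
  have hK : IsCompact K := hKx.cthickening
  have hKxK : Kx ⊆ K := Metric.self_subset_cthickening _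
  -- continuity of W and its gradient
  have hWc : Continuous W := hW.continuous
  have hgrad : Continuous fun y => gradient W y := by
    have h1 : Continuous (fderiv ℝ W) := hW.continuous_fderiv one_ne_zero
    exact (InnerProductSpace.toDual ℝ (EuclideanSpace ℝ (Fin n))).symm.continuous.comp h1
  have hgradinner : ∀ (p v : EuclideanSpace ℝ (Fin n)), ⟪gradient W p, v⟫ = fderiv ℝ W p v := by
    intro p v
    exact InnerProductSpace.toDual_symm_apply
  -- bounds on K
  obtain ⟨M₀, hM₀⟩ := hK.exists_bound_of_continuousOn hWc.continuousOn
  obtain ⟨M₁', hM₁'⟩ := hK.exists_bound_of_continuousOn hgrad.continuousOn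
  set M₁ : ℝ := max M₁' 1 with hM₁def
  have hM₁pos : 0 < M₁ := lt_of_lt_of_le one_pos (le_max_right _ _)
  have hM₁ : ∀ p ∈ K, ‖gradient W p‖ ≤ M₁ := fun p hp => (hM₁' p hp).trans (le_max_left _ _)
  -- measurability of the target integrand
  have hxm : AEStronglyMeasurable x (volume.restrict (Set.Ioc 0 T)) :=
    (hxc.aestronglyMeasurable measurableSet_Icc).mono_measure
      (Measure.restrict_mono Set.Ioc_subset_Icc_self le_rfl)
  have hGm : AEStronglyMeasurable G (volume.restrict (Set.Ioc 0 T)) := hGint.aestronglyMeasurable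
  set B : ℝ → ℝ := fun t => Real.exp (-β * t) * (β * W (x t) - ⟪gradient W (x t), G t⟫) with hBdef
  have hBm : AEStronglyMeasurable B (volume.restrict (Set.Ioc 0 T)) := by
    refine AEStronglyMeasurable.mul ?_ ?_
    · exact (Real.continuous_exp.comp (continuous_const.mul continuous_id)).aestronglyMeasurable
    · exact ((hWc.aestronglyMeasurable.comp_aemeasurable hxm.aemeasurable).const_mul β).sub
        ((hgrad.aestronglyMeasurable.comp_aemeasurable hxm.aemeasurable).inner hGm)
  have hxKx : ∀ t ∈ Set.Icc (0:ℝ) T, x t ∈ Kx := fun t ht => Set.mem_image_of_mem x ht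
  have hexple : ∀ t : ℝ, 0 ≤ t → Real.exp (-β * t) ≤ 1 := by
    intro t ht
    rw [Real.exp_le_one_iff]
    have : 0 ≤ β * t := mul_nonneg hβ ht
    linarith
  have hBint : IntegrableOn B (Set.Ioc 0 T) := by
    refine Integrable.mono' ((integrable_const (β * M₀)).add (hGint.norm.const_mul M₁)) hBm ?_
    filter_upwards [ae_restrict_mem measurableSet_Ioc] with t ht
    have htI : t ∈ Set.Icc (0:ℝ) T := ⟨ht.1.le, ht.2⟩
    have hxK : x t ∈ K := hKxK (hxKx t htI)
    have h1 : |Real.exp (-β * t)| ≤ 1 := by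
      rw [abs_of_pos (Real.exp_pos _)]; exact hexple t ht.1.le
    have h2 : |β * W (x t) - ⟪gradient W (x t), G t⟫| ≤ β * M₀ + M₁ * ‖G t‖ := by
      refine (abs_sub _ _).trans (add_le_add ?_ ?_)
      · rw [abs_mul, abs_of_nonneg hβ]
        exact mul_le_mul_of_nonneg_left ((Real.norm_eq_abs _ ▸ hM₀ (x t) hxK)) hβ
      · exact (abs_real_inner_le_norm _ _).trans
          (mul_le_mul_of_nonneg_right (hM₁ _ hxK) (norm_nonneg _))
    calc ‖B t‖ = |Real.exp (-β * t)| * |β * W (x t) - ⟪gradient W (x t), G t⟫| := by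
          rw [Real.norm_eq_abs, abs_mul]
      _ ≤ 1 * (β * M₀ + M₁ * ‖G t‖) := by
          refine mul_le_mul h1 h2 (abs_nonneg _) zero_le_one
      _ = β * M₀ + M₁ * ‖G t‖ := one_mul _
  -- the ε-argument
  refine le_of_forall_pos_le_add fun ε εpos => ?_
  set B₀ : ℝ := ∫ t in Set.Ioc (0:ℝ) T, ‖G t‖ with hB₀def
  have hB₀nonneg : 0 ≤ B₀ := integral_nonneg fun t => norm_nonneg _
  set D : ℝ := 3 + β * T + B₀ with hDdef
  have hD : 0 < D := by positivity
  set ε' : ℝ := ε / D with hε'def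
  have hε' : 0 < ε' := div_pos εpos hD
  -- uniform continuity moduli
  have hucW := (hK.uniformContinuousOn_of_continuous hWc.continuousOn)
  rw [Metric.uniformContinuousOn_iff] at hucW
  obtain ⟨δ₁, hδ₁pos, hδ₁⟩ := hucW ε' hε'
  have hucG := (hK.uniformContinuousOn_of_continuous hgrad.continuousOn)
  rw [Metric.uniformContinuousOn_iff] at hucG
  obtain ⟨δ₂, hδ₂pos, hδ₂⟩ := hucG ε' hε'
  set ρ : ℝ := min (min δ₁ δ₂ / 2) (min 1 (ε' / M₁)) with hρdef
  have hρpos : 0 < ρ := by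
    refine lt_min (by positivity) (lt_min one_pos (by positivity))
  have hminpos : 0 < min δ₁ δ₂ := lt_min hδ₁pos hδ₂pos
  have hρmin : ρ ≤ min δ₁ δ₂ / 2 := min_le_left _ _
  have hρδ₁ : ρ < δ₁ := by
    have : min δ₁ δ₂ / 2 < min δ₁ δ₂ := by linarith
    have h2 := min_le_left δ₁ δ₂
    linarith
  have hρδ₂ : ρ < δ₂ := by
    have : min δ₁ δ₂ / 2 < min δ₁ δ₂ := by linarith
    have h2 := min_le_right δ₁ δ₂
    linarith
  have hρ1 : ρ ≤ 1 := le_trans (min_le_right _ _) (min_le_left _ _)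
  have hρM : M₁ * ρ ≤ ε' := by
    have : ρ ≤ ε' / M₁ := le_trans (min_le_right _ _) (min_le_right _ _)
    calc M₁ * ρ ≤ M₁ * (ε' / M₁) := by nlinarith
      _ = ε' := by field_simp
  -- continuous approximation of G
  set Gi : ℝ → EuclideanSpace ℝ (Fin n) := (Set.Ioc (0:ℝ) T).indicator G with hGidef
  have hGiint : Integrable Gi := (integrable_indicator_iff measurableSet_Ioc).2 hGint
  obtain ⟨g, hgsupp, hgL1, hgc, hgint⟩ := hGiint.exists_hasCompactSupport_integral_sub_le hρpos
  have hsubint : Integrable (fun t => ‖g t - G t‖) (volume.restrict (Set.Ioc 0 T)) :=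
    (hgint.integrableOn.sub hGint).norm
  have hL1' : ∫ t in Set.Ioc (0:ℝ) T, ‖g t - G t‖ ≤ ρ := by
    have heq : ∫ t in Set.Ioc (0:ℝ) T, ‖g t - G t‖ = ∫ t in Set.Ioc (0:ℝ) T, ‖Gi t - g t‖ := by
      refine setIntegral_congr_fun measurableSet_Ioc fun t ht => ?_
      rw [hGidef, Set.indicator_of_mem ht, norm_sub_rev]
    rw [heq]
    exact le_trans (setIntegral_le_integral (hGiint.sub hgint).norm
      (Filter.Eventually.of_forall fun t => norm_nonneg _)) hgL1
  -- approximate trajectory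
  set y : ℝ → EuclideanSpace ℝ (Fin n) := fun t => x₀ + ∫ s in (0:ℝ)..t, g s with hydef
  have hyd : ∀ t, HasDerivAt y (g t) t := by
    intro t
    exact (intervalIntegral.integral_hasDerivAt_right (hgc.intervalIntegrable _ _)
      (hgc.stronglyMeasurableAtFilter _ _) hgc.continuousAt).const_add x₀
  have hyc : Continuous y := by
    rw [continuous_iff_continuousAt]; exact fun t => (hyd t).continuousAt
  have hy0 : y 0 = x₀ := by simp [hydef]
  have hclose : ∀ t ∈ Set.Icc (0:ℝ) T, ‖y t - x t‖ ≤ ρ := by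
    intro t ht
    have hGii : IntervalIntegrable G volume 0 t :=
      (intervalIntegrable_iff_integrableOn_Ioc_of_le ht.1).2
        (hGint.mono_set (Set.Ioc_subset_Ioc le_rfl ht.2))
    have hgii : IntervalIntegrable g volume 0 t := hgc.intervalIntegrable 0 t
    have hdiff : y t - x t = ∫ s in (0:ℝ)..t, (g s - G s) := by
      rw [hxeq t ht.1, intervalIntegral.integral_sub hgii hGii, hydef]
      beta_reduce
      abel
    rw [hdiff]
    calc ‖∫ s in (0:ℝ)..t, (g s - G s)‖ ≤ ∫ s in (0:ℝ)..t, ‖g s - G s‖ :=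
          intervalIntegral.norm_integral_le_integral_norm ht.1
      _ = ∫ s in Set.Ioc (0:ℝ) t, ‖g s - G s‖ := intervalIntegral.integral_of_le ht.1
      _ ≤ ∫ s in Set.Ioc (0:ℝ) T, ‖g s - G s‖ := by
          refine setIntegral_mono_set hsubint
            (Filter.Eventually.of_forall fun s => norm_nonneg _)
            (HasSubset.Subset.eventuallyLE (Set.Ioc_subset_Ioc le_rfl ht.2))
      _ ≤ ρ := hL1'
  have hyK : ∀ t ∈ Set.Icc (0:ℝ) T, y t ∈ K := by
    intro t ht
    refine Metric.mem_cthickening_of_dist_le (y t) (x t) 1 Kx (hxKx t ht) ?_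
    rw [dist_eq_norm]
    exact (hclose t ht).trans hρ1
  -- FTC for the approximation
  set A : ℝ → ℝ := fun t => Real.exp (-β * t) * (β * W (y t) - ⟪gradient W (y t), g t⟫) with hAdef
  have hAcont : Continuous A := by
    refine Continuous.mul (Real.continuous_exp.comp (continuous_const.mul continuous_id)) ?_
    exact (continuous_const.mul (hWc.comp hyc)).sub ((hgrad.comp hyc).inner hgc)
  have hφd : ∀ t : ℝ, HasDerivAt (fun t => Real.exp (-β * t) * W (y t)) (-A t) t := by
    intro t
    have h1 : HasDerivAt (fun t : ℝ => Real.exp (-β * t)) (-β * Real.exp (-β * t)) t := by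
      have := ((hasDerivAt_id t).const_mul (-β)).exp
      simpa [mul_comm] using this
    have h2 : HasDerivAt (fun t => W (y t)) ((fderiv ℝ W (y t)) (g t)) t :=
      ((hW.differentiable one_ne_zero) (y t)).hasFDerivAt.comp_hasDerivAt t (hyd t)
    have h3 := h1.mul h2
    convert h3 using 1
    case e'_4 => rfl
    case e'_5 => rfl
    case e'_8 => rfl
    rw [hAdef]
    simp only []
    rw [← hgradinner]
    ring
  have hFTC := intervalIntegral.integral_eq_sub_of_hasDerivAt (fun t (_ : t ∈ Set.uIcc 0 T) => hφd t)
      ((hAcont.neg).intervalIntegrable 0 T)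
  have hmain : W x₀ - Real.exp (-β * T) * W (y T) = ∫ t in Set.Ioc (0:ℝ) T, A t := by
    rw [intervalIntegral.integral_neg] at hFTC
    rw [← intervalIntegral.integral_of_le hT]
    have h0 : Real.exp (-β * 0) * W (y 0) = W x₀ := by rw [hy0]; norm_num
    simp only [h0] at hFTC
    linarith
  -- error estimates
  have hAint : IntegrableOn A (Set.Ioc 0 T) := hAcont.integrableOn_Ioc
  have hboundint : IntegrableOn (fun t => β * ε' + (ε' * ‖g t‖ + M₁ * ‖g t - G t‖))
      (Set.Ioc 0 T) := by
    exact (integrable_const _).add (((hgint.integrableOn.norm).const_mul ε').add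
      (hsubint.const_mul M₁))
  have hptwise : ∀ t ∈ Set.Ioc (0:ℝ) T,
      A t - B t ≤ β * ε' + (ε' * ‖g t‖ + M₁ * ‖g t - G t‖) := by
    intro t ht
    have htI : t ∈ Set.Icc (0:ℝ) T := ⟨ht.1.le, ht.2⟩
    have hxK : x t ∈ K := hKxK (hxKx t htI)
    have hyKt : y t ∈ K := hyK t htI
    have hdist : dist (y t) (x t) ≤ ρ := by rw [dist_eq_norm]; exact hclose t htI
    have hWdiff : |W (y t) - W (x t)| ≤ ε' := by
      have := hδ₁ (y t) hyKt (x t) hxK (lt_of_le_of_lt hdist hρδ₁)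
      rw [Real.dist_eq] at this
      exact this.le
    have hGdiff : ‖gradient W (y t) - gradient W (x t)‖ ≤ ε' := by
      have := hδ₂ (y t) hyKt (x t) hxK (lt_of_le_of_lt hdist hρδ₂)
      rw [dist_eq_norm] at this
      exact this.le
    have hexp1 : Real.exp (-β * t) ≤ 1 := hexple t ht.1.le
    have hexp0 : (0:ℝ) < Real.exp (-β * t) := Real.exp_pos _
    have hkey : A t - B t = Real.exp (-β * t) *
        (β * (W (y t) - W (x t)) - ⟪gradient W (y t) - gradient W (x t), g t⟫
          - ⟪gradient W (x t), g t - G t⟫) := by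
      rw [hAdef, hBdef]
      simp only [inner_sub_left, inner_sub_right]
      ring
    rw [hkey]
    have habs : |β * (W (y t) - W (x t)) - ⟪gradient W (y t) - gradient W (x t), g t⟫
        - ⟪gradient W (x t), g t - G t⟫| ≤ β * ε' + (ε' * ‖g t‖ + M₁ * ‖g t - G t‖) := by
      refine (abs_sub _ _).trans ?_
      have hb1 : |β * (W (y t) - W (x t)) - ⟪gradient W (y t) - gradient W (x t), g t⟫| ≤
          β * ε' + ε' * ‖g t‖ := by
        refine (abs_sub _ _).trans (add_le_add ?_ ?_)
        · rw [abs_mul, abs_of_nonneg hβ]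
          exact mul_le_mul_of_nonneg_left hWdiff hβ
        · exact (abs_real_inner_le_norm _ _).trans
            (mul_le_mul_of_nonneg_right hGdiff (norm_nonneg _))
      have hb2 : |⟪gradient W (x t), g t - G t⟫| ≤ M₁ * ‖g t - G t‖ :=
        (abs_real_inner_le_norm _ _).trans
          (mul_le_mul_of_nonneg_right (hM₁ _ hxK) (norm_nonneg _))
      linarith
    set Q : ℝ := β * (W (y t) - W (x t)) - ⟪gradient W (y t) - gradient W (x t), g t⟫
          - ⟪gradient W (x t), g t - G t⟫ with hQdef
    calc Real.exp (-β * t) * Q ≤ Real.exp (-β * t) * |Q| :=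
          mul_le_mul_of_nonneg_left (le_abs_self _) hexp0.le
      _ ≤ 1 * (β * ε' + (ε' * ‖g t‖ + M₁ * ‖g t - G t‖)) :=
          mul_le_mul hexp1 habs (abs_nonneg _) zero_le_one
      _ = β * ε' + (ε' * ‖g t‖ + M₁ * ‖g t - G t‖) := one_mul _
  have hIoc_vol : (volume (Set.Ioc (0:ℝ) T)).toReal = T := by
    rw [Real.volume_Ioc, sub_zero, ENNReal.toReal_ofReal hT]
  have hgnorm : ∫ t in Set.Ioc (0:ℝ) T, ‖g t‖ ≤ B₀ + 1 := by
    have h1 : ∫ t in Set.Ioc (0:ℝ) T, ‖g t‖ ≤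
        ∫ t in Set.Ioc (0:ℝ) T, (‖g t - G t‖ + ‖G t‖) := by
      refine setIntegral_mono_on hgint.integrableOn.norm (hsubint.add hGint.norm)
        measurableSet_Ioc fun t _ => ?_
      calc ‖g t‖ = ‖(g t - G t) + G t‖ := by rw [sub_add_cancel]
        _ ≤ ‖g t - G t‖ + ‖G t‖ := norm_add_le _ _
    rw [integral_add hsubint hGint.norm] at h1
    have := hL1'
    have hρ1' : ρ ≤ 1 := hρ1
    rw [hB₀def]
    linarith
  have hintdiff : (∫ t in Set.Ioc (0:ℝ) T, A t) - ∫ t in Set.Ioc (0:ℝ) T, B t ≤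
      β * ε' * T + (ε' * (B₀ + 1) + ε') := by
    rw [← integral_sub hAint hBint]
    calc ∫ t in Set.Ioc (0:ℝ) T, (A t - B t)
        ≤ ∫ t in Set.Ioc (0:ℝ) T, (β * ε' + (ε' * ‖g t‖ + M₁ * ‖g t - G t‖)) :=
          setIntegral_mono_on (hAint.sub hBint) hboundint measurableSet_Ioc hptwise
      _ = β * ε' * T + (ε' * (∫ t in Set.Ioc (0:ℝ) T, ‖g t‖)
            + M₁ * ∫ t in Set.Ioc (0:ℝ) T, ‖g t - G t‖) := by
          have e1 : ∫ t in Set.Ioc (0:ℝ) T, (β * ε' + (ε' * ‖g t‖ + M₁ * ‖g t - G t‖)) =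
              (∫ _t in Set.Ioc (0:ℝ) T, β * ε')
                + ∫ t in Set.Ioc (0:ℝ) T, (ε' * ‖g t‖ + M₁ * ‖g t - G t‖) :=
            integral_add (integrable_const _)
              (((hgint.integrableOn.norm).const_mul ε').add (hsubint.const_mul M₁))
          have e2 : ∫ t in Set.Ioc (0:ℝ) T, (ε' * ‖g t‖ + M₁ * ‖g t - G t‖) =
              (∫ t in Set.Ioc (0:ℝ) T, ε' * ‖g t‖)
                + ∫ t in Set.Ioc (0:ℝ) T, M₁ * ‖g t - G t‖ :=
            integral_add ((hgint.integrableOn.norm).const_mul ε') (hsubint.const_mul M₁)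
          rw [e1, e2, setIntegral_const, MeasureTheory.integral_const_mul, MeasureTheory.integral_const_mul, measureReal_def, hIoc_vol,
            smul_eq_mul]
          ring
      _ ≤ β * ε' * T + (ε' * (B₀ + 1) + ε') := by
          have h1 : ε' * (∫ t in Set.Ioc (0:ℝ) T, ‖g t‖) ≤ ε' * (B₀ + 1) :=
            mul_le_mul_of_nonneg_left hgnorm hε'.le
          have h2 : M₁ * (∫ t in Set.Ioc (0:ℝ) T, ‖g t - G t‖) ≤ ε' := by
            calc M₁ * (∫ t in Set.Ioc (0:ℝ) T, ‖g t - G t‖) ≤ M₁ * ρ :=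
                  mul_le_mul_of_nonneg_left hL1' hM₁pos.le
              _ ≤ ε' := hρM
          linarith
  -- endpoint estimate
  have hTI : T ∈ Set.Icc (0:ℝ) T := ⟨hT, le_rfl⟩
  have hend : Real.exp (-β * T) * (W (y T) - W (x T)) ≤ ε' := by
    have hWdiff : |W (y T) - W (x T)| ≤ ε' := by
      have hd : dist (y T) (x T) ≤ ρ := by rw [dist_eq_norm]; exact hclose T hTI
      have := hδ₁ (y T) (hyK T hTI) (x T) (hKxK (hxKx T hTI)) (lt_of_le_of_lt hd hρδ₁)
      rw [Real.dist_eq] at this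
      exact this.le
    calc Real.exp (-β * T) * (W (y T) - W (x T)) ≤
        Real.exp (-β * T) * |W (y T) - W (x T)| :=
          mul_le_mul_of_nonneg_left (le_abs_self _) (Real.exp_pos _).le
      _ ≤ 1 * ε' := mul_le_mul (hexple T hT) hWdiff (abs_nonneg _) zero_le_one
      _ = ε' := one_mul _
  -- put everything together
  have hsum : ε' * D = ε := by rw [hε'def]; field_simp
  have hfinal : W x₀ - Real.exp (-β * T) * W (x T) =
      (W x₀ - Real.exp (-β * T) * W (y T)) + Real.exp (-β * T) * (W (y T) - W (x T)) := by
    ring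
  rw [hfinal, hmain]
  have hfin2 : β * ε' * T + (ε' * (B₀ + 1) + ε') + ε' = ε := by
    rw [← hsum, hDdef]; ring
  linarith [hintdiff, hend]


open Set intervalIntegral Filter in
/-- If `V` is `C¹` and satisfies the Bellman inequality
`l(x,u) − βV(x) + ∇V(x)·f(x,u) ≥ 0` on `X × U` (with `X, U` compact, `β > 0`, `l, f`
continuous), then for every `x₀ ∈ X` and every admissible pair `(x(·),u(·))` from `x₀` one has
`V(x₀) ≤ ∫₀^∞ e^{−βt} l(x(t),u(t)) dt`; in particular `V(x₀) ≤ V*(x₀)` on `X` (whenever an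
admissible pair from `x₀` exists, `V*` being the infimum of the cost over admissible pairs). -/
theorem bellman_lower_bound (n m : ℕ) (β : ℝ) (hβ : 0 < β)
    (X : Set (EuclideanSpace ℝ (Fin n))) (U : Set (EuclideanSpace ℝ (Fin m)))
    (hX : IsCompact X) (hU : IsCompact U)
    (l : EuclideanSpace ℝ (Fin n) → EuclideanSpace ℝ (Fin m) → ℝ)
    (f : EuclideanSpace ℝ (Fin n) → EuclideanSpace ℝ (Fin m) → EuclideanSpace ℝ (Fin n))
    (hl : Continuous fun p : EuclideanSpace ℝ (Fin n) × EuclideanSpace ℝ (Fin m) => l p.1 p.2)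
    (hf : Continuous fun p : EuclideanSpace ℝ (Fin n) × EuclideanSpace ℝ (Fin m) => f p.1 p.2)
    (V : EuclideanSpace ℝ (Fin n) → ℝ) (hV : ContDiff ℝ 1 V)
    (hbell : ∀ x ∈ X, ∀ u ∈ U, 0 ≤ l x u - β * V x + ⟪gradient V x, f x u⟫) :
    (∀ x₀ ∈ X, ∀ (x : ℝ → EuclideanSpace ℝ (Fin n)) (u : ℝ → EuclideanSpace ℝ (Fin m)),
      IsAdmissiblePair f X U x₀ x u → V x₀ ≤ trajCost β l x u) ∧
    (∀ x₀ ∈ X,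
      (∃ x u, IsAdmissiblePair f X U x₀ x u) →
      V x₀ ≤ sInf {c : ℝ | ∃ x u, IsAdmissiblePair f X U x₀ x u ∧ c = trajCost β l x u}) := by
  classical
  -- global bounds
  obtain ⟨Cf, hCf⟩ := (hX.prod hU).exists_bound_of_continuousOn hf.continuousOn
  obtain ⟨Cl, hCl⟩ := (hX.prod hU).exists_bound_of_continuousOn hl.continuousOn
  obtain ⟨MV, hMV⟩ := hX.exists_bound_of_continuousOn hV.continuous.continuousOn
  have hgradV : Continuous fun y => gradient V y := by
    have h1 : Continuous (fderiv ℝ V) := hV.continuous_fderiv one_ne_zero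
    exact (InnerProductSpace.toDual ℝ (EuclideanSpace ℝ (Fin n))).symm.continuous.comp h1
  obtain ⟨Mg, hMg⟩ := hX.exists_bound_of_continuousOn hgradV.continuousOn
  have main : ∀ x₀ ∈ X, ∀ (x : ℝ → EuclideanSpace ℝ (Fin n)) (u : ℝ → EuclideanSpace ℝ (Fin m)),
      IsAdmissiblePair f X U x₀ x u → V x₀ ≤ trajCost β l x u := by
    intro x₀ hx₀ x u hadm
    obtain ⟨hu, huU, hxX, hxeq⟩ := hadm
    set G : ℝ → EuclideanSpace ℝ (Fin n) := fun s => f (x s) (u s) with hGdef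
    have hC : ∀ s, 0 ≤ s → ‖G s‖ ≤ Cf := fun s hs =>
      hCf (x s, u s) (Set.mk_mem_prod (hxX s hs) (huU s hs))
    have hint : ∀ t, 0 ≤ t → IntegrableOn G (Set.Ioc 0 t) :=
      boot f x₀ x u hu hf Cf hC hxeq
    have hx0 : x 0 = x₀ := by simpa using hxeq 0 le_rfl
    -- continuity of x
    have hxcont : ∀ T, 0 ≤ T → ContinuousOn x (Set.Icc 0 T) := by
      intro T hT0
      have h1 : IntegrableOn G (Set.Icc 0 T) :=
        (integrableOn_Icc_iff_integrableOn_Ioc).2 (hint T hT0)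
      have h2 := (continuousOn_const (c := x₀)).add (intervalIntegral.continuousOn_primitive h1)
      refine h2.congr fun t ht => ?_
      rw [hxeq t ht.1, intervalIntegral.integral_of_le ht.1]
      rfl
    have hxIci : ContinuousOn x (Set.Ici 0) := by
      intro t ht
      have h1 : ContinuousWithinAt x (Set.Icc 0 (t + 1)) t :=
        hxcont (t + 1) (by simp at ht; linarith) t ⟨ht, by linarith⟩
      refine h1.mono_of_mem_nhdsWithin ?_
      have h2 : Set.Ici (0:ℝ) ∩ Set.Iio (t + 1) ∈ nhdsWithin t (Set.Ici 0) :=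
        Filter.inter_mem self_mem_nhdsWithin
          (mem_nhdsWithin_of_mem_nhds (Iio_mem_nhds (by linarith)))
      exact Filter.mem_of_superset h2 fun s hs => ⟨hs.1, hs.2.le⟩
    -- integrability of the cost integrand
    have hxmIoi : AEStronglyMeasurable x (volume.restrict (Set.Ioi 0)) :=
      (hxIci.aestronglyMeasurable measurableSet_Ici).mono_measure
        (Measure.restrict_mono Set.Ioi_subset_Ici_self le_rfl)
    have hlmeas : AEStronglyMeasurable (fun t => Real.exp (-β * t) * l (x t) (u t))
        (volume.restrict (Set.Ioi 0)) := by
      refine AEStronglyMeasurable.mul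
        (Real.continuous_exp.comp (continuous_const.mul continuous_id)).aestronglyMeasurable ?_
      exact hl.comp_aestronglyMeasurable (hxmIoi.prodMk hu.aestronglyMeasurable.restrict)
    have hli : IntegrableOn (fun t => Real.exp (-β * t) * l (x t) (u t)) (Set.Ioi 0) := by
      refine Integrable.mono' ((exp_neg_integrableOn_Ioi 0 hβ).const_mul Cl) hlmeas ?_
      filter_upwards [ae_restrict_mem measurableSet_Ioi] with t ht
      have h1 : |l (x t) (u t)| ≤ Cl := by
        have := hCl (x t, u t) (Set.mk_mem_prod (hxX t ht.le) (huU t ht.le))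
        simpa [Real.norm_eq_abs] using this
      rw [Real.norm_eq_abs, abs_mul, abs_of_pos (Real.exp_pos _)]
      calc Real.exp (-β * t) * |l (x t) (u t)| ≤ Real.exp (-β * t) * Cl :=
            mul_le_mul_of_nonneg_left h1 (Real.exp_pos _).le
        _ = Cl * Real.exp (-β * t) := mul_comm _ _
      -- note: goal was `... ≤ Cl * exp (-t)`? check
    -- per-horizon inequality
    have hperT : ∀ T, 0 ≤ T → V x₀ ≤
        (∫ t in Set.Ioc (0:ℝ) T, Real.exp (-β * t) * l (x t) (u t))
          + Real.exp (-β * T) * V (x T) := by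
      intro T hT0
      have h1 := lemC β T hβ.le hT0 G x₀ x (hint T hT0) hxeq (hxcont T hT0) V hV
      -- integrability of the lemC integrand
      have hxmIoc : AEStronglyMeasurable x (volume.restrict (Set.Ioc 0 T)) :=
        ((hxcont T hT0).aestronglyMeasurable measurableSet_Icc).mono_measure
          (Measure.restrict_mono Set.Ioc_subset_Icc_self le_rfl)
      have hGm : AEStronglyMeasurable G (volume.restrict (Set.Ioc 0 T)) :=
        (hint T hT0).aestronglyMeasurable
      have hBm : AEStronglyMeasurable
          (fun t => Real.exp (-β * t) * (β * V (x t) - ⟪gradient V (x t), G t⟫))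
          (volume.restrict (Set.Ioc 0 T)) := by
        refine AEStronglyMeasurable.mul
          (Real.continuous_exp.comp (continuous_const.mul continuous_id)).aestronglyMeasurable ?_
        exact ((hV.continuous.aestronglyMeasurable.comp_aemeasurable
          hxmIoc.aemeasurable).const_mul β).sub
          ((hgradV.aestronglyMeasurable.comp_aemeasurable hxmIoc.aemeasurable).inner hGm)
      have hBint : IntegrableOn
          (fun t => Real.exp (-β * t) * (β * V (x t) - ⟪gradient V (x t), G t⟫))
          (Set.Ioc 0 T) := by
        refine Integrable.mono' (integrable_const (β * MV + Mg * Cf)) hBm ?_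
        filter_upwards [ae_restrict_mem measurableSet_Ioc] with t ht
        have hxX' : x t ∈ X := hxX t ht.1.le
        have he1 : Real.exp (-β * t) ≤ 1 := by
          rw [Real.exp_le_one_iff]; nlinarith [ht.1.le, hβ.le]
        have h2 : |β * V (x t) - ⟪gradient V (x t), G t⟫| ≤ β * MV + Mg * Cf := by
          refine (abs_sub _ _).trans (add_le_add ?_ ?_)
          · rw [abs_mul, abs_of_nonneg hβ.le]
            exact mul_le_mul_of_nonneg_left (Real.norm_eq_abs _ ▸ hMV (x t) hxX') hβ.le
          · refine (abs_real_inner_le_norm _ _).trans ?_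
            have hg1 : ‖gradient V (x t)‖ ≤ Mg := hMg (x t) hxX'
            have hg2 : ‖G t‖ ≤ Cf := hC t ht.1.le
            have hMg0 : 0 ≤ Mg := le_trans (norm_nonneg _) hg1
            nlinarith [norm_nonneg (G t)]
        rw [Real.norm_eq_abs, abs_mul, abs_of_pos (Real.exp_pos _)]
        nlinarith [Real.exp_pos (-β * t), abs_nonneg (β * V (x t) - ⟪gradient V (x t), G t⟫)]
      have hRint : IntegrableOn (fun t => Real.exp (-β * t) * l (x t) (u t)) (Set.Ioc 0 T) :=
        hli.mono_set Set.Ioc_subset_Ioi_self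
      have h2 : (∫ t in Set.Ioc (0:ℝ) T,
            Real.exp (-β * t) * (β * V (x t) - ⟪gradient V (x t), G t⟫)) ≤
          ∫ t in Set.Ioc (0:ℝ) T, Real.exp (-β * t) * l (x t) (u t) := by
        refine setIntegral_mono_on hBint hRint measurableSet_Ioc fun t ht => ?_
        have hb := hbell (x t) (hxX t ht.1.le) (u t) (huU t ht.1.le)
        refine mul_le_mul_of_nonneg_left ?_ (Real.exp_pos _).le
        have : ⟪gradient V (x t), G t⟫ = ⟪gradient V (x t), f (x t) (u t)⟫ := rfl
        linarith [hb]
      linarith [h1, h2]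
    -- pass to the limit
    have hlim1 : Tendsto (fun T => ∫ t in Set.Ioc (0:ℝ) T, Real.exp (-β * t) * l (x t) (u t))
        atTop (nhds (trajCost β l x u)) := by
      have h1 := intervalIntegral_tendsto_integral_Ioi 0 hli tendsto_id
      refine h1.congr' ?_
      filter_upwards [eventually_ge_atTop (0:ℝ)] with T hT0
      simp [intervalIntegral.integral_of_le hT0]
    have hlim2 : Tendsto (fun T => Real.exp (-β * T) * V (x T)) atTop (nhds 0) := by
      have h1 : Tendsto (fun T : ℝ => β * T) atTop atTop :=
        Tendsto.const_mul_atTop hβ tendsto_id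
      have h2 : Tendsto (fun T : ℝ => Real.exp (-(β * T))) atTop (nhds 0) :=
        Real.tendsto_exp_neg_atTop_nhds_zero.comp h1
      have h3 : Tendsto (fun T : ℝ => MV * Real.exp (-(β * T))) atTop (nhds 0) := by
        simpa using h2.const_mul MV
      refine squeeze_zero_norm' ?_ h3
      filter_upwards [eventually_ge_atTop (0:ℝ)] with T hT0
      rw [Real.norm_eq_abs, abs_mul, abs_of_pos (Real.exp_pos _), neg_mul]
      have h4 : |V (x T)| ≤ MV := Real.norm_eq_abs _ ▸ hMV (x T) (hxX T hT0)
      nlinarith [Real.exp_pos (-(β * T))]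
    have hlim := hlim1.add hlim2
    rw [add_zero] at hlim
    refine ge_of_tendsto hlim ?_
    filter_upwards [eventually_ge_atTop (0:ℝ)] with T hT0
    exact hperT T hT0
  refine ⟨main, fun x₀ hx₀ hne => ?_⟩
  obtain ⟨x, u, hadm⟩ := hne
  refine le_csInf ⟨trajCost β l x u, x, u, hadm, rfl⟩ ?_
  rintro c ⟨x', u', hadm', rfl⟩
  exact main x₀ hx₀ x' u' hadm'
end
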